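/- arXiv:math/0209050 — 6 statements merged into one kernel-verified Lean document; each statement's English description precedes it below -/
import Mathlib

section
/- Let s > 0 and c ∈ ℝ, and let g : [s, ∞) → ℝ be continuously differentiable and satisfy, for all t ≥ s, the integro-differential equation g'(t) = −g(t) + (1/t)·∫_s^t g(ξ) dξ + c/t. Then g'(s) = −g(s) + c/s, and for all t ≥ s one has g(t) = g'(s)·s·e^s·I(t,s) + g(s). -/
open MeasureTheory Real

/-- Lemma 1 of the paper: if `g` is continuously differentiable on `[s,∞)` and satisfies
`g'(t) = -g(t) + (1/t)∫_s^t g(ξ)dξ + c/t` there, then `g'(s) = -g(s) + c/s` and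
`g(t) = g'(s)·s·e^s·I(t,s) + g(s)` for all `t ≥ s`, where `I(t,s) = ∫_s^t e^{-ξ}/ξ dξ`. -/
theorem stmt0 (s c : ℝ) (hs : 0 < s) (g g' : ℝ → ℝ)
    (hderiv : ∀ t ∈ Set.Ici s, HasDerivWithinAt g (g' t) (Set.Ici s) t)
    (hg'cont : ContinuousOn g' (Set.Ici s))
    (heq : ∀ t ∈ Set.Ici s,
      g' t = -g t + (1 / t) * (∫ ξ in s..t, g ξ) + c / t) :
    g' s = -g s + c / s ∧
    ∀ t ∈ Set.Ici s,
      g t = g' s * s * Real.exp s * (∫ ξ in s..t, Real.exp (-ξ) / ξ) + g s := by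
  have hgcont : ContinuousOn g (Set.Ici s) := fun t ht => (hderiv t ht).continuousWithinAt
  have hfirst : g' s = -g s + c / s := by
    have := heq s (le_refl s)
    simpa using this
  refine ⟨hfirst, ?_⟩
  set F : ℝ → ℝ := fun t => ∫ ξ in s..t, g ξ with hF_def
  -- integrability of g on subintervals
  have hint : ∀ t ∈ Set.Ici s, IntervalIntegrable g volume s t := by
    intro t ht
    exact (hgcont.mono (by
      rw [Set.uIcc_of_le ht]; exact Set.Icc_subset_Ici_self)).intervalIntegrable
  -- F has derivative g within Ici s
  have hF : ∀ t ∈ Set.Ici s, HasDerivWithinAt F (g t) (Set.Ici s) t := by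
    intro t ht
    have hmeas : StronglyMeasurableAtFilter g (nhdsWithin s (Set.Ioi s)) volume :=
      ⟨Set.Ici s, Filter.mem_of_superset self_mem_nhdsWithin Set.Ioi_subset_Ici_self,
        hgcont.aestronglyMeasurable measurableSet_Ici⟩
    rcases eq_or_lt_of_le (Set.mem_Ici.mp ht) with h | hlt
    · subst h
      exact intervalIntegral.integral_hasDerivWithinAt_right (s := Set.Ici s)
        (t := Set.Ioi s) (hint _ Set.self_mem_Ici) hmeas
        ((hgcont _ Set.self_mem_Ici).mono Set.Ioi_subset_Ici_self)
    · have hmem : Set.Ici s ∈ nhds t := Ici_mem_nhds hlt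
      have hca : ContinuousAt g t := (hgcont t ht).continuousAt hmem
      exact (intervalIntegral.integral_hasDerivAt_right (hint t ht)
        ⟨Set.Ici s, hmem, hgcont.aestronglyMeasurable measurableSet_Ici⟩
        hca).hasDerivWithinAt
  -- g' has derivative -(1+1/t) g' t within Ici s
  have hg'deriv : ∀ t ∈ Set.Ici s, HasDerivWithinAt g' (-(1 + 1/t) * g' t) (Set.Ici s) t := by
    intro t ht
    have htpos : 0 < t := lt_of_lt_of_le hs ht
    have htne : t ≠ 0 := ne_of_gt htpos
    have h1 : HasDerivWithinAt (fun y => -g y + y⁻¹ * F y + c * y⁻¹)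
        (-g' t + (-(t^2)⁻¹ * F t + t⁻¹ * g t) + c * (-(t^2)⁻¹)) (Set.Ici s) t := by
      exact ((hderiv t ht).neg.add
        ((hasDerivWithinAt_inv htne (Set.Ici s)).mul (hF t ht))).add
        ((hasDerivWithinAt_inv htne (Set.Ici s)).const_mul c)
    have heqF : F t = t * (g' t + g t) - c := by
      have := heq t ht
      field_simp at this
      linarith
    have h2 : HasDerivWithinAt g'
        (-g' t + (-(t^2)⁻¹ * F t + t⁻¹ * g t) + c * (-(t^2)⁻¹)) (Set.Ici s) t := by
      apply h1.congr
      · intro y hy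
        have hy0 : y ≠ 0 := ne_of_gt (lt_of_lt_of_le hs hy)
        rw [heq y hy]
        field_simp
        rfl
      · rw [heq t ht]
        field_simp
        rfl
    convert h2 using 1
    rw [heqF]
    field_simp
    ring
  -- φ(t) = t * exp t * g' t is constant
  have hφ : ∀ t ∈ Set.Ici s, HasDerivWithinAt (fun y => y * Real.exp y * g' y)
      (0 : ℝ) (Set.Ici s) t := by
    intro t ht
    have htne : (t : ℝ) ≠ 0 := ne_of_gt (lt_of_lt_of_le hs ht)
    have h1 : HasDerivWithinAt (fun y => y * Real.exp y * g' y)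
        ((1 * Real.exp t + t * Real.exp t) * g' t
          + t * Real.exp t * (-(1 + 1/t) * g' t)) (Set.Ici s) t := by
      exact ((hasDerivWithinAt_id t _).mul
        (Real.hasDerivAt_exp t).hasDerivWithinAt).mul (hg'deriv t ht)
    convert h1 using 1
    field_simp
    ring
  have hconst : ∀ t ∈ Set.Ici s, t * Real.exp t * g' t = s * Real.exp s * g' s := by
    intro t ht
    have := (convex_Ici s).norm_image_sub_le_of_norm_hasDerivWithin_le (C := 0)
      (f := fun y => y * Real.exp y * g' y) (f' := fun _ => (0 : ℝ))
      (fun x hx => hφ x hx) (fun x _ => by simp) (Set.self_mem_Ici) ht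
    simp only [norm_zero, zero_mul] at this
    have h0 : |t * Real.exp t * g' t - s * Real.exp s * g' s| ≤ 0 := by
      simpa [Real.norm_eq_abs] using this
    have := abs_nonneg (t * Real.exp t * g' t - s * Real.exp s * g' s)
    have : |t * Real.exp t * g' t - s * Real.exp s * g' s| = 0 := le_antisymm h0 this
    have := abs_eq_zero.mp this
    linarith
  -- explicit formula for g'
  have hg'formula : ∀ t ∈ Set.Ici s, g' t = g' s * s * Real.exp s * (Real.exp (-t) / t) := by
    intro t ht
    have htpos : 0 < t := lt_of_lt_of_le hs ht
    have hexp : Real.exp t ≠ 0 := Real.exp_ne_zero t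
    have h := hconst t ht
    rw [Real.exp_neg]
    field_simp
    linarith [h]
  -- FTC: ∫_s^t g' = g t - g s
  intro t ht
  have hIcc : Set.Icc s t ⊆ Set.Ici s := Set.Icc_subset_Ici_self
  have hFTC : ∫ ξ in s..t, g' ξ = g t - g s := by
    apply intervalIntegral.integral_eq_sub_of_hasDeriv_right_of_le ht
      (hgcont.mono hIcc)
    · intro x hx
      exact (hderiv x (le_of_lt hx.1)).mono (fun y hy => le_trans (le_of_lt hx.1) (le_of_lt hy))
    · exact (hg'cont.mono (by rw [Set.uIcc_of_le ht]; exact hIcc)).intervalIntegrable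
  have hcong : ∫ ξ in s..t, g' ξ
      = ∫ ξ in s..t, g' s * s * Real.exp s * (Real.exp (-ξ) / ξ) := by
    apply intervalIntegral.integral_congr
    intro ξ hξ
    rw [Set.uIcc_of_le ht] at hξ
    exact hg'formula ξ (hIcc hξ)
  rw [hcong, intervalIntegral.integral_const_mul] at hFTC
  linarith
end

section
/- For every integer j ≥ 0 and every real t ≥ 0, the series Σ_{k=j}^∞ σ₂(k,j)·j!·(−1)^{k−j}·p_k(t) converges and its sum equals e^{−t}·t^j/j!. -/
open MeasureTheory ProbabilityTheory Real

open MeasureTheory ProbabilityTheory Real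

/-- Signless Stirling numbers of the first kind: coefficient of `x^j` in `x(x+1)⋯(x+k-1)`. -/
noncomputable def stirling1 (k j : ℕ) : ℝ :=
  (∏ i ∈ Finset.range k, (Polynomial.X + Polynomial.C (i : ℝ))).coeff j

/-- Stirling numbers of the second kind. -/
def stirling2 : ℕ → ℕ → ℕ
  | 0, 0 => 1
  | 0, _ + 1 => 0
  | _ + 1, 0 => 0
  | n + 1, k + 1 => (k + 1) * stirling2 n (k + 1) + stirling2 n k

/-- `p_j(t) = e^{-t} Σ_{k≥j} (t^k/k!) σ₁(k,j)/k!` (terms with `k<j` vanish). -/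
noncomputable def pfn (j : ℕ) (t : ℝ) : ℝ :=
  Real.exp (-t) * ∑' k : ℕ, t ^ k / (Nat.factorial k : ℝ) * (stirling1 k j / (Nat.factorial k : ℝ))

/-- `q_j(t) = e^{-t} Σ_{k≥0} (t^k/(k+1)!) Σ_{i=0}^k σ₁(i,j)/i!`. -/
noncomputable def qfn (j : ℕ) (t : ℝ) : ℝ :=
  Real.exp (-t) * ∑' k : ℕ, t ^ k / (Nat.factorial (k + 1) : ℝ) *
    ∑ i ∈ Finset.range (k + 1), stirling1 i j / (Nat.factorial i : ℝ)

/-- `I(t,s) = ∫_s^t e^{-ξ}/ξ dξ`. -/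
noncomputable def Ifun (t s : ℝ) : ℝ := ∫ ξ in s..t, Real.exp (-ξ) / ξ

/-- `I(s) = ∫_s^∞ e^{-ξ}/ξ dξ`. -/
noncomputable def Iinf (s : ℝ) : ℝ := ∫ ξ in Set.Ioi s, Real.exp (-ξ) / ξ

/-- `I₂(t,s) = ∫_s^t e^{-ξ}/ξ² dξ`. -/
noncomputable def I2fun (t s : ℝ) : ℝ := ∫ ξ in s..t, Real.exp (-ξ) / ξ ^ 2

/-- `I₂(s) = ∫_s^∞ e^{-ξ}/ξ² dξ`. -/
noncomputable def I2inf (s : ℝ) : ℝ := ∫ ξ in Set.Ioi s, Real.exp (-ξ) / ξ ^ 2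

/-- `J(t) = ∫_0^t (e^ξ - 1)/ξ dξ`. -/
noncomputable def Jfun (t : ℝ) : ℝ := ∫ ξ in (0:ℝ)..t, (Real.exp ξ - 1) / ξ

/-! ### Auxiliary lemmas on Stirling numbers of the first kind -/

lemma s1_zero (j : ℕ) : stirling1 0 j = if j = 0 then 1 else 0 := by
  simp [stirling1, Polynomial.coeff_one]

lemma s1_succ (k j : ℕ) :
    stirling1 (k + 1) (j + 1) = stirling1 k j + stirling1 k (j + 1) * k := by
  unfold stirling1
  rw [Finset.prod_range_succ]
  have h : (Polynomial.X + Polynomial.C ((k : ℕ) : ℝ))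
      = Polynomial.X - Polynomial.C (-((k : ℕ) : ℝ)) := by
    rw [map_neg, sub_neg_eq_add]
  rw [h, Polynomial.coeff_mul_X_sub_C]
  ring

lemma s1_succ_zero (k : ℕ) : stirling1 (k + 1) 0 = stirling1 k 0 * k := by
  unfold stirling1
  rw [Finset.prod_range_succ, Polynomial.mul_coeff_zero]
  simp

lemma s1_zero' (k : ℕ) : stirling1 (k + 1) 0 = 0 := by
  induction k with
  | zero => rw [s1_succ_zero]; simp
  | succ k ih => rw [s1_succ_zero, ih, zero_mul]

lemma s1_nonneg (k : ℕ) : ∀ j, 0 ≤ stirling1 k j := by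
  induction k with
  | zero => intro j; rw [s1_zero]; split <;> norm_num
  | succ k ih =>
    intro j
    cases j with
    | zero => rw [s1_succ_zero]; exact mul_nonneg (ih 0) (Nat.cast_nonneg k)
    | succ j =>
      rw [s1_succ]
      exact add_nonneg (ih j) (mul_nonneg (ih (j + 1)) (Nat.cast_nonneg k))

lemma s1_eq_zero (k : ℕ) : ∀ j, k < j → stirling1 k j = 0 := by
  induction k with
  | zero => intro j h; rw [s1_zero, if_neg (by omega)]
  | succ k ih =>
    intro j h
    match j, h with
    | (j + 1), h =>
      rw [s1_succ, ih j (by omega), ih (j + 1) (by omega)]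
      ring

lemma s1_sum (k : ℕ) :
    ∑ n ∈ Finset.range (k + 1), stirling1 k n = (Nat.factorial k : ℝ) := by
  induction k with
  | zero => simp [s1_zero]
  | succ k ih =>
    have e1 := Finset.sum_range_succ' (fun n => stirling1 k n) (k + 1)
    have e2 : ∑ n ∈ Finset.range (k + 2), stirling1 k n = (Nat.factorial k : ℝ) := by
      rw [Finset.sum_range_succ, s1_eq_zero k (k + 1) (by omega), ih, add_zero]
    have e3 : ∑ i ∈ Finset.range (k + 1), stirling1 k (i + 1)
        = (Nat.factorial k : ℝ) - stirling1 k 0 := by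
      rw [e2] at e1; linarith
    rw [Finset.sum_range_succ']
    have e4 : ∀ i ∈ Finset.range (k + 1),
        stirling1 (k + 1) (i + 1) = stirling1 k i + stirling1 k (i + 1) * k :=
      fun i _ => s1_succ k i
    rw [Finset.sum_congr rfl e4, Finset.sum_add_distrib, ← Finset.sum_mul, ih, e3, s1_succ_zero]
    have e5 : stirling1 k 0 * (k : ℝ) = 0 := by
      cases k with
      | zero => simp
      | succ k => rw [s1_zero']; ring
    rw [Nat.factorial_succ]
    push_cast
    linarith

lemma s1_le (k n : ℕ) : stirling1 k n ≤ (Nat.factorial k : ℝ) := by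
  by_cases h : n ≤ k
  · calc stirling1 k n ≤ ∑ i ∈ Finset.range (k + 1), stirling1 k i :=
        Finset.single_le_sum (fun i _ => s1_nonneg k i) (Finset.mem_range.2 (by omega))
    _ = (Nat.factorial k : ℝ) := s1_sum k
  · rw [s1_eq_zero k n (by omega)]
    positivity

lemma s1_sum_range (k N : ℕ) (h : k < N) :
    ∑ n ∈ Finset.range N, stirling1 k n = (Nat.factorial k : ℝ) := by
  rw [← s1_sum k]
  symm
  apply Finset.sum_subset (Finset.range_subset_range.2 (by omega))
  intro x hx hnx
  exact s1_eq_zero k x (by simp only [Finset.mem_range] at hx hnx; omega)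

lemma s1_shift_le (k j : ℕ) :
    ∑ m ∈ Finset.range (k + 1), stirling1 k (j + m) ≤ (Nat.factorial k : ℝ) := by
  have e1 := Finset.sum_range_add (fun n => stirling1 k n) j (k + 1)
  rw [s1_sum_range k (j + (k + 1)) (by omega)] at e1
  have e2 : 0 ≤ ∑ n ∈ Finset.range j, stirling1 k n :=
    Finset.sum_nonneg fun n _ => s1_nonneg k n
  linarith

/-! ### Auxiliary lemmas on Stirling numbers of the second kind -/

lemma s2_zero_of_lt (n : ℕ) : ∀ j, n < j → stirling2 n j = 0 := by
  induction n with
  | zero =>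
    intro j h
    match j, h with
    | (m + 1), _ => rfl
  | succ n ih =>
    intro j h
    match j, h with
    | (m + 1), h =>
      show (m + 1) * stirling2 n (m + 1) + stirling2 n m = 0
      rw [ih (m + 1) (by omega), ih m (by omega)]
      ring

lemma s2_le (n : ℕ) : ∀ j, stirling2 n j ≤ (j + 1) ^ n := by
  induction n with
  | zero => intro j; cases j <;> simp [stirling2]
  | succ n ih =>
    intro j
    cases j with
    | zero => show 0 ≤ 1 ^ (n + 1); positivity
    | succ m =>
      show (m + 1) * stirling2 n (m + 1) + stirling2 n m ≤ (m + 2) ^ (n + 1)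
      have h1 := ih (m + 1)
      have h2 := ih m
      have h3 : (m + 1) ^ n ≤ (m + 2) ^ n := Nat.pow_le_pow_left (by omega) n
      calc (m + 1) * stirling2 n (m + 1) + stirling2 n m
          ≤ (m + 1) * (m + 2) ^ n + (m + 2) ^ n := by
            have : stirling2 n (m + 1) ≤ (m + 2) ^ n := by
              simpa [show m + 1 + 1 = m + 2 from rfl] using ih (m + 1)
            have h4 : stirling2 n m ≤ (m + 2) ^ n := le_trans h2 h3
            exact Nat.add_le_add (Nat.mul_le_mul_left _ this) h4
        _ = (m + 2) ^ (n + 1) := by rw [pow_succ]; ring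

/-! ### The Stirling inversion identity -/

lemma key_inv (k : ℕ) : ∀ j, ∑ n ∈ Finset.range (k + 1),
    (-1 : ℝ) ^ n * stirling1 k n * (stirling2 n j : ℝ)
      = if k = j then (-1 : ℝ) ^ k else 0 := by
  induction k with
  | zero =>
    intro j
    cases j with
    | zero => simp [stirling2, s1_zero]
    | succ m => simp [s2_zero_of_lt 0 (m + 1) (by omega), s1_zero]
  | succ k ih =>
    intro j
    rw [Finset.sum_range_succ', s1_zero' k]
    simp only [mul_zero, zero_mul, add_zero]
    cases j with
    | zero =>
      have hz : ∀ i, (stirling2 (i + 1) 0 : ℝ) = 0 := fun i => by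
        rw [show stirling2 (i + 1) 0 = 0 from rfl]; norm_num
      simp [hz]
    | succ m =>
      have hA1 := ih (m + 1)
      have hA2 := ih m
      have hS2 : ∑ i ∈ Finset.range (k + 1),
          (-1 : ℝ) ^ (i + 1) * stirling1 k (i + 1) * (stirling2 (i + 1) (m + 1) : ℝ)
          = ∑ n ∈ Finset.range (k + 1),
            (-1 : ℝ) ^ n * stirling1 k n * (stirling2 n (m + 1) : ℝ) := by
        have e1 := Finset.sum_range_succ'
          (fun n => (-1 : ℝ) ^ n * stirling1 k n * (stirling2 n (m + 1) : ℝ)) (k + 1)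
        have e2 : ∑ n ∈ Finset.range (k + 2),
            (-1 : ℝ) ^ n * stirling1 k n * (stirling2 n (m + 1) : ℝ)
            = ∑ n ∈ Finset.range (k + 1),
              (-1 : ℝ) ^ n * stirling1 k n * (stirling2 n (m + 1) : ℝ) := by
          rw [Finset.sum_range_succ, s1_eq_zero k (k + 1) (by omega)]
          ring
        have e3 : (-1 : ℝ) ^ 0 * stirling1 k 0 * (stirling2 0 (m + 1) : ℝ) = 0 := by
          rw [s2_zero_of_lt 0 (m + 1) (by omega)]
          norm_num
        rw [e2, e3, add_zero] at e1
        linarith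
      have hterm : ∀ i ∈ Finset.range (k + 1),
          (-1 : ℝ) ^ (i + 1) * stirling1 (k + 1) (i + 1) * (stirling2 (i + 1) (m + 1) : ℝ)
          = (-((m : ℝ) + 1)) * ((-1) ^ i * stirling1 k i * (stirling2 i (m + 1) : ℝ))
            + (-1) * ((-1) ^ i * stirling1 k i * (stirling2 i m : ℝ))
            + (k : ℝ) * ((-1) ^ (i + 1) * stirling1 k (i + 1) * (stirling2 (i + 1) (m + 1) : ℝ)) := by
        intro i _
        have hrec : (stirling2 (i + 1) (m + 1) : ℝ)
            = ((m : ℝ) + 1) * (stirling2 i (m + 1) : ℝ) + (stirling2 i m : ℝ) := by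
          rw [show stirling2 (i + 1) (m + 1)
            = (m + 1) * stirling2 i (m + 1) + stirling2 i m from rfl]
          push_cast
          ring
        rw [s1_succ, hrec]
        ring
      rw [Finset.sum_congr rfl hterm, Finset.sum_add_distrib, Finset.sum_add_distrib,
        ← Finset.mul_sum, ← Finset.mul_sum, ← Finset.mul_sum, hS2, hA1, hA2]
      by_cases h1 : k = m + 1
      · subst h1
        rw [if_pos rfl, if_neg (by omega), if_neg (by omega)]
        push_cast
        ring
      · by_cases h2 : k = m
        · subst h2
          rw [if_pos rfl, if_neg h1, if_pos rfl]
          ring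
        · rw [if_neg h1, if_neg h2, if_neg (by omega)]
          ring

lemma key_shift (k j : ℕ) :
    ∑ m ∈ Finset.range (k + 1),
      (-1 : ℝ) ^ m * (stirling2 (j + m) j : ℝ) * stirling1 k (j + m)
      = if k = j then 1 else 0 := by
  have hB : ∑ n ∈ Finset.range (j + (k + 1)),
      (-1 : ℝ) ^ n * stirling1 k n * (stirling2 n j : ℝ)
      = if k = j then (-1 : ℝ) ^ k else 0 := by
    rw [← key_inv k j]
    symm
    apply Finset.sum_subset (Finset.range_subset_range.2 (by omega))
    intro x hx hnx
    rw [s1_eq_zero k x (by simp only [Finset.mem_range] at hx hnx; omega)]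
    ring
  rw [Finset.sum_range_add] at hB
  have hz : ∑ n ∈ Finset.range j,
      (-1 : ℝ) ^ n * stirling1 k n * (stirling2 n j : ℝ) = 0 := by
    apply Finset.sum_eq_zero
    intro n hn
    rw [s2_zero_of_lt n j (Finset.mem_range.1 hn)]
    norm_num
  rw [hz, zero_add] at hB
  have hcongr : ∀ m ∈ Finset.range (k + 1),
      (-1 : ℝ) ^ m * (stirling2 (j + m) j : ℝ) * stirling1 k (j + m)
      = (-1 : ℝ) ^ j * ((-1 : ℝ) ^ (j + m) * stirling1 k (j + m) * (stirling2 (j + m) j : ℝ)) := by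
    intro m _
    have hj : (-1 : ℝ) ^ j * (-1 : ℝ) ^ j = 1 := by
      rw [← pow_add]
      exact Even.neg_one_pow ⟨j, rfl⟩
    rw [pow_add]
    linear_combination (-((stirling2 (j + m) j : ℝ) * stirling1 k (j + m) * (-1 : ℝ) ^ m)) * hj
  rw [Finset.sum_congr rfl hcongr, ← Finset.mul_sum, hB]
  split_ifs with h
  · subst h
    rw [← pow_add]
    exact Even.neg_one_pow ⟨k, rfl⟩
  · ring

/-- Inversion formula (Lemma 2 of the paper): for every `j ≥ 0` and `t ≥ 0`,
`Σ_{k=j}^∞ σ₂(k,j)·j!·(-1)^{k-j}·p_k(t)` converges with sum `e^{-t} t^j / j!`. -/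
theorem stmt1 (j : ℕ) (t : ℝ) (ht : 0 ≤ t) :
    HasSum (fun k : ℕ =>
        (stirling2 (j + k) j : ℝ) * (Nat.factorial j : ℝ) * (-1) ^ k * pfn (j + k) t)
      (Real.exp (-t) * t ^ j / (Nat.factorial j : ℝ)) := by
  have hjfac : (0 : ℝ) < (Nat.factorial j : ℝ) := by positivity
  set c : ℕ → ℝ := fun m => (stirling2 (j + m) j : ℝ) * (Nat.factorial j : ℝ) * (-1) ^ m
    with hc
  set g : ℕ → ℕ → ℝ := fun n k =>
    t ^ k / (Nat.factorial k : ℝ) * (stirling1 k n / (Nat.factorial k : ℝ)) with hg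
  have hgnonneg : ∀ n k, 0 ≤ g n k := fun n k =>
    mul_nonneg (div_nonneg (pow_nonneg ht k) (Nat.cast_nonneg _))
      (div_nonneg (s1_nonneg k n) (Nat.cast_nonneg _))
  have hgsum : ∀ n, Summable (g n) := by
    intro n
    apply Summable.of_nonneg_of_le (hgnonneg n) _ (Real.summable_pow_div_factorial t)
    intro k
    have hkfac : (0 : ℝ) < (Nat.factorial k : ℝ) := by positivity
    have h1 : stirling1 k n / (Nat.factorial k : ℝ) ≤ 1 := by
      rw [div_le_one hkfac]
      exact s1_le k n
    calc g n k ≤ t ^ k / (Nat.factorial k : ℝ) * 1 :=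
        mul_le_mul_of_nonneg_left h1 (div_nonneg (pow_nonneg ht k) (Nat.cast_nonneg _))
      _ = t ^ k / (Nat.factorial k : ℝ) := mul_one _
  have hpfn : ∀ n, pfn n t = Real.exp (-t) * ∑' k, g n k := fun n => rfl
  set F : ℕ × ℕ → ℝ := fun p => c p.1 * (Real.exp (-t) * g (j + p.1) p.2) with hF
  -- off-support vanishing
  have hFzero : ∀ k m, m ∉ Finset.range (k + 1) → F (m, k) = 0 := by
    intro k m hm
    have hz : stirling1 k (j + m) = 0 :=
      s1_eq_zero k (j + m) (by simp only [Finset.mem_range] at hm; omega)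
    simp only [hF, hg, hz, zero_div, mul_zero, zero_mul]
  -- fiberwise sums in m, for fixed k
  have hfibk : ∀ k, HasSum (fun m => F (m, k))
      (if k = j then Real.exp (-t) * t ^ j / (Nat.factorial j : ℝ) else 0) := by
    intro k
    have h0 : HasSum (fun m => F (m, k)) (∑ m ∈ Finset.range (k + 1), F (m, k)) :=
      hasSum_sum_of_ne_finset_zero (hFzero k)
    have hkfac : (0 : ℝ) < (Nat.factorial k : ℝ) := by positivity
    have hsum : ∑ m ∈ Finset.range (k + 1), F (m, k)
        = (if k = j then Real.exp (-t) * t ^ j / (Nat.factorial j : ℝ) else 0) := by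
      have e1 : ∑ m ∈ Finset.range (k + 1), F (m, k)
          = (Real.exp (-t) * (t ^ k / (Nat.factorial k : ℝ)) * (Nat.factorial j : ℝ)
              / (Nat.factorial k : ℝ)) *
            ∑ m ∈ Finset.range (k + 1),
              (-1 : ℝ) ^ m * (stirling2 (j + m) j : ℝ) * stirling1 k (j + m) := by
        rw [Finset.mul_sum]
        apply Finset.sum_congr rfl
        intro m _
        simp only [hF, hc, hg]
        ring
      rw [e1, key_shift]
      split_ifs with h
      · subst h
        field_simp
      · ring
    exact hsum ▸ h0
  -- summability of the swapped family via absolute values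
  have habs : Summable (fun p : ℕ × ℕ => |F (p.2, p.1)|) := by
    rw [summable_prod_of_nonneg (fun p => abs_nonneg _)]
    constructor
    · intro k
      apply summable_of_ne_finset_zero (s := Finset.range (k + 1))
      intro m hm
      rw [hFzero k m hm, abs_zero]
    · apply Summable.of_nonneg_of_le (fun k => tsum_nonneg fun m => abs_nonneg _)
        (fun k => ?_)
        ((Real.summable_pow_div_factorial (((j : ℝ) + 1) * t)).mul_left
          ((Nat.factorial j : ℝ) * Real.exp (-t)))
      rw [tsum_eq_sum (fun m hm => by rw [hFzero k m hm, abs_zero])]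
      have hkfac : (0 : ℝ) < (Nat.factorial k : ℝ) := by positivity
      set C : ℝ := (Nat.factorial j : ℝ) * Real.exp (-t) * (t ^ k / (Nat.factorial k : ℝ))
        * (((j : ℝ) + 1) ^ k / (Nat.factorial k : ℝ)) with hC
      have hCnonneg : 0 ≤ C := by
        apply mul_nonneg
        apply mul_nonneg
        apply mul_nonneg (Nat.cast_nonneg _) (le_of_lt (Real.exp_pos _))
        · exact div_nonneg (pow_nonneg ht k) (Nat.cast_nonneg _)
        · exact div_nonneg (pow_nonneg (by positivity) k) (Nat.cast_nonneg _)
      have hb1 : ∀ m ∈ Finset.range (k + 1), |F (m, k)| ≤ C * stirling1 k (j + m) := by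
        intro m _
        have hFval : F (m, k) = (-1 : ℝ) ^ m *
            ((stirling2 (j + m) j : ℝ) * (Nat.factorial j : ℝ)
              * (Real.exp (-t) * g (j + m) k)) := by
          simp only [hF, hc]; ring
        have habs' : |F (m, k)| = (stirling2 (j + m) j : ℝ) * (Nat.factorial j : ℝ)
            * (Real.exp (-t) * g (j + m) k) := by
          rw [hFval, abs_mul, abs_pow, abs_neg, abs_one, one_pow, one_mul, abs_of_nonneg]
          exact mul_nonneg (mul_nonneg (Nat.cast_nonneg _) (Nat.cast_nonneg _))
            (mul_nonneg (le_of_lt (Real.exp_pos _)) (hgnonneg _ _))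
        have hkey : (stirling2 (j + m) j : ℝ) * stirling1 k (j + m)
            ≤ ((j : ℝ) + 1) ^ k * stirling1 k (j + m) := by
          by_cases hmk : j + m ≤ k
          · apply mul_le_mul_of_nonneg_right _ (s1_nonneg _ _)
            calc (stirling2 (j + m) j : ℝ) ≤ ((j + 1 : ℕ) : ℝ) ^ (j + m) := by
                  exact_mod_cast s2_le (j + m) j
              _ ≤ ((j : ℝ) + 1) ^ k := by
                  push_cast
                  exact pow_le_pow_right₀ (by linarith [Nat.cast_nonneg (α := ℝ) j]) hmk
          · rw [s1_eq_zero k (j + m) (by omega)]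
            simp
        calc |F (m, k)| = ((Nat.factorial j : ℝ) * Real.exp (-t)
              * (t ^ k / (Nat.factorial k : ℝ)) * (1 / (Nat.factorial k : ℝ)))
              * ((stirling2 (j + m) j : ℝ) * stirling1 k (j + m)) := by
              rw [habs']; simp only [hg]; ring
          _ ≤ ((Nat.factorial j : ℝ) * Real.exp (-t)
              * (t ^ k / (Nat.factorial k : ℝ)) * (1 / (Nat.factorial k : ℝ)))
              * (((j : ℝ) + 1) ^ k * stirling1 k (j + m)) := by
              apply mul_le_mul_of_nonneg_left hkey
              apply mul_nonneg
              apply mul_nonneg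
              apply mul_nonneg (Nat.cast_nonneg _) (le_of_lt (Real.exp_pos _))
              · exact div_nonneg (pow_nonneg ht k) (Nat.cast_nonneg _)
              · positivity
          _ = C * stirling1 k (j + m) := by rw [hC]; ring
      calc ∑ m ∈ Finset.range (k + 1), |F (m, k)|
          ≤ ∑ m ∈ Finset.range (k + 1), C * stirling1 k (j + m) := Finset.sum_le_sum hb1
        _ = C * ∑ m ∈ Finset.range (k + 1), stirling1 k (j + m) := by rw [Finset.mul_sum]
        _ ≤ C * (Nat.factorial k : ℝ) :=
            mul_le_mul_of_nonneg_left (s1_shift_le k j) hCnonneg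
        _ = (Nat.factorial j : ℝ) * Real.exp (-t) * ((((j : ℝ) + 1) * t) ^ k
              / (Nat.factorial k : ℝ)) := by
            rw [hC, mul_pow]
            field_simp
  have hFswap : Summable (fun p : ℕ × ℕ => F (p.2, p.1)) := Summable.of_abs habs
  have hFsummable : Summable F := (Equiv.prodComm ℕ ℕ).summable_iff.1 hFswap
  have h2 : HasSum (fun k => if k = j then
        Real.exp (-t) * t ^ j / (Nat.factorial j : ℝ) else 0)
      (∑' p : ℕ × ℕ, F (p.2, p.1)) :=
    hFswap.hasSum.prod_fiberwise hfibk
  have h3 : (∑' p : ℕ × ℕ, F (p.2, p.1))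
      = Real.exp (-t) * t ^ j / (Nat.factorial j : ℝ) :=
    h2.unique (hasSum_ite_eq j _)
  have hfibm : ∀ m, HasSum (fun k => F (m, k)) (c m * pfn (j + m) t) := by
    intro m
    have h := ((hgsum (j + m)).hasSum.mul_left (Real.exp (-t))).mul_left (c m)
    rw [hpfn (j + m)]
    exact h
  have hfinal : HasSum (fun m => c m * pfn (j + m) t) (∑' p : ℕ × ℕ, F p) :=
    hFsummable.hasSum.prod_fiberwise hfibm
  have h4 : (∑' p : ℕ × ℕ, F p) = Real.exp (-t) * t ^ j / (Nat.factorial j : ℝ) := by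
    rw [← h3]
    exact ((Equiv.prodComm ℕ ℕ).tsum_eq F).symm
  rw [h4] at hfinal
  exact hfinal
end

section
/- Let s > 0 and c ∈ ℝ, and let g : [s, ∞) → ℝ be continuously differentiable and satisfy, for all t ≥ s, the integro-differential equation g'(t) = −g(t)·(1 + 1/t) + (1/t)·∫_s^t g(ξ) dξ + c/t. Then g'(s) = c/s − (1 + 1/s)·g(s), and for all t ≥ s one has g(t) = g'(s)·s²·e^s·I₂(t,s) + g(s). -/
open MeasureTheory Real

/-- Lemma 3 of the paper: if `g` is continuously differentiable on `[s,∞)` and satisfies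
`g'(t) = -g(t)(1 + 1/t) + (1/t)∫_s^t g(ξ)dξ + c/t` there, then
`g'(s) = c/s - (1 + 1/s)g(s)` and `g(t) = g'(s)·s²·e^s·I₂(t,s) + g(s)` for all `t ≥ s`,
where `I₂(t,s) = ∫_s^t e^{-ξ}/ξ² dξ`. -/
theorem stmt2 (s c : ℝ) (hs : 0 < s) (g g' : ℝ → ℝ)
    (hderiv : ∀ t ∈ Set.Ici s, HasDerivWithinAt g (g' t) (Set.Ici s) t)
    (hg'cont : ContinuousOn g' (Set.Ici s))
    (heq : ∀ t ∈ Set.Ici s,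
      g' t = -g t * (1 + 1 / t) + (1 / t) * (∫ ξ in s..t, g ξ) + c / t) :
    g' s = c / s - (1 + 1 / s) * g s ∧
    ∀ t ∈ Set.Ici s,
      g t = g' s * s ^ 2 * Real.exp s * (∫ ξ in s..t, Real.exp (-ξ) / ξ ^ 2) + g s := by
  have hgc : ContinuousOn g (Set.Ici s) := fun t ht => (hderiv t ht).continuousWithinAt
  have h1 : g' s = c / s - (1 + 1 / s) * g s := by
    have := heq s (le_refl s)
    rw [intervalIntegral.integral_same] at this
    rw [this]; ring
  refine ⟨h1, ?_⟩
  -- interval integrability of g on s..t for t ≥ s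
  have hint : ∀ t ∈ Set.Ici s, IntervalIntegrable g volume s t := fun t ht =>
    (hgc.mono (by rw [Set.uIcc_of_le ht]; exact Set.Icc_subset_Ici_self)).intervalIntegrable
  -- derivative of the integral
  have hG : ∀ t ∈ Set.Ici s, HasDerivWithinAt (fun u => ∫ ξ in s..u, g ξ) (g t)
      (Set.Ici s) t := by
    intro t ht
    rcases eq_or_lt_of_le (Set.mem_Ici.1 ht) with rfl | hlt
    · exact intervalIntegral.integral_hasDerivWithinAt_right (hint s ht)
        ⟨Set.Ici s, Filter.mem_of_superset self_mem_nhdsWithin Set.Ioi_subset_Ici_self,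
          hgc.aestronglyMeasurable measurableSet_Ici⟩
        ((hgc s ht).mono Set.Ioi_subset_Ici_self)
    · have : HasDerivAt (fun u => ∫ ξ in s..u, g ξ) (g t) t := by
        apply intervalIntegral.integral_hasDerivAt_right (hint t ht)
        · exact ⟨Set.Ioi s, Ioi_mem_nhds hlt, (hgc.mono (Set.Ioi_subset_Ici_self)).aestronglyMeasurable measurableSet_Ioi⟩
        · have := (hgc t ht)
          rw [ContinuousWithinAt, nhdsWithin_eq_nhds.2 (Ici_mem_nhds hlt)] at this
          exact this
      exact this.hasDerivWithinAt
  -- derivative of g' within Ici s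
  have hg'deriv : ∀ t ∈ Set.Ici s, HasDerivWithinAt g' (-(g' t) * (1 + 2 / t))
      (Set.Ici s) t := by
    intro t ht
    have htpos : 0 < t := lt_of_lt_of_le hs ht
    have hF := HasDerivWithinAt.div
        (((hG t ht).const_add c).sub
          (((hasDerivWithinAt_id t (Set.Ici s)).add_const 1).mul (hderiv t ht)))
        (hasDerivWithinAt_id t (Set.Ici s)) (ne_of_gt htpos)
    simp only [id_eq, one_mul, mul_one] at hF
    have hcongr : ∀ u ∈ Set.Ici s,
        g' u = (c + (∫ ξ in s..u, g ξ) - (u + 1) * g u) / u := by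
      intro u hu
      have hupos : 0 < u := lt_of_lt_of_le hs hu
      rw [heq u hu]; field_simp; ring
    have := hF.congr hcongr (hcongr t ht)
    refine this.congr_deriv ?_
    have hNt : c + (∫ ξ in s..t, g ξ) - (t + 1) * g t = t * g' t := by
      rw [heq t ht]; field_simp; ring
    simp only [Pi.sub_apply, Pi.mul_apply]; rw [hNt]; field_simp; ring
  -- ψ t = g' t * (t^2 * exp t) has derivative 0
  have hψ : ∀ t ∈ Set.Ici s,
      HasDerivWithinAt (fun u => g' u * (u ^ 2 * Real.exp u)) 0 (Set.Ici s) t := by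
    intro t ht
    have htpos : 0 < t := lt_of_lt_of_le hs ht
    have h2 : HasDerivWithinAt (fun u : ℝ => u ^ 2 * Real.exp u)
        (2 * t * Real.exp t + t ^ 2 * Real.exp t) (Set.Ici s) t := by
      have := ((hasDerivAt_pow 2 t).mul (Real.hasDerivAt_exp t)).hasDerivWithinAt (s := Set.Ici s)
      exact this.congr_deriv (by ring)
    have := (hg'deriv t ht).mul h2
    refine this.congr_deriv ?_
    field_simp
    ring
  -- ψ is constant
  have hconst : ∀ t ∈ Set.Ici s, g' t * (t ^ 2 * Real.exp t) = g' s * (s ^ 2 * Real.exp s) := by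
    intro t ht
    have hcont : ContinuousOn (fun u => g' u * (u ^ 2 * Real.exp u)) (Set.Icc s t) :=
      ((hg'cont.mono Set.Icc_subset_Ici_self).mul (by fun_prop))
    exact constant_of_has_deriv_right_zero hcont
      (fun x hx => (hψ x (Set.mem_Ici.2 hx.1)).mono (Set.Ici_subset_Ici.2 hx.1))
      t (Set.mem_Icc.2 ⟨ht, le_refl t⟩)
  -- explicit formula for g'
  have hg'form : ∀ t ∈ Set.Ici s,
      g' t = g' s * s ^ 2 * Real.exp s * (Real.exp (-t) / t ^ 2) := by
    intro t ht
    have htpos : 0 < t := lt_of_lt_of_le hs ht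
    have h := hconst t ht
    have h2 : t ^ 2 * Real.exp t ≠ 0 := by positivity
    field_simp [Real.exp_neg]
    have he : Real.exp (-t) * Real.exp t = 1 := by rw [← Real.exp_add]; simp
    linear_combination (Real.exp (-t)) * h - (g' t * t ^ 2) * he
  intro t ht
  have hftc : (∫ ξ in s..t, g' ξ) = g t - g s := by
    apply intervalIntegral.integral_eq_sub_of_hasDeriv_right_of_le ht
      (hgc.mono Set.Icc_subset_Ici_self)
      (fun x hx => (hderiv x (Set.mem_Ici.2 hx.1.le)).mono
        (Set.Ioi_subset_Ici hx.1.le))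
    exact (hg'cont.mono (by rw [Set.uIcc_of_le ht]; exact Set.Icc_subset_Ici_self)).intervalIntegrable
  have : (∫ ξ in s..t, g' ξ) = g' s * s ^ 2 * Real.exp s * ∫ ξ in s..t, Real.exp (-ξ) / ξ ^ 2 := by
    rw [← intervalIntegral.integral_const_mul]
    apply intervalIntegral.integral_congr
    intro ξ hξ
    rw [Set.uIcc_of_le ht] at hξ
    exact hg'form ξ (Set.mem_Ici.2 hξ.1)
  linarith [hftc, this]
end

section
/- Fix u₁, u₂ ∈ (0,1]. Let E₁, E₂ be i.i.d. standard exponential (rate 1) random variables and let V be uniform on [0,1], with E₁, E₂, V jointly independent. Then the random variable E₁/u₁ + (E₂/(u₁u₂))·1_{{V > u₂}} has the exponential distribution with rate u₁u₂, i.e. the same law as E/(u₁u₂) for a standard exponential random variable E. -/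
open MeasureTheory ProbabilityTheory Real Set

/-- The standard exponential measure on ℝ. -/
noncomputable def expM : Measure ℝ :=
  (volume.restrict (Set.Ioi (0:ℝ))).withDensity (fun t => ENNReal.ofReal (Real.exp (-t)))

lemma lint_exp_Ioi (m : ℝ) :
    ∫⁻ t in Set.Ioi m, ENNReal.ofReal (Real.exp (-t)) = ENNReal.ofReal (Real.exp (-m)) := by
  rw [← ofReal_integral_eq_lintegral_ofReal
      (by have := exp_neg_integrableOn_Ioi m one_pos; simp only [neg_mul, one_mul] at this; exact this)
      (Filter.Eventually.of_forall fun t => (exp_nonneg _))]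
  rw [integral_exp_neg_Ioi]

lemma expM_Ioi (y : ℝ) : expM (Set.Ioi y) = ENNReal.ofReal (Real.exp (-(max y 0))) := by
  rw [expM, withDensity_apply _ measurableSet_Ioi,
    Measure.restrict_restrict measurableSet_Ioi, Set.Ioi_inter_Ioi, lint_exp_Ioi]

lemma expM_univ : expM Set.univ = 1 := by
  rw [expM, withDensity_apply _ MeasurableSet.univ, setLIntegral_univ]
  show ∫⁻ t in Set.Ioi (0:ℝ), ENNReal.ofReal (Real.exp (-t)) = 1
  rw [lint_exp_Ioi]; simp

instance : IsProbabilityMeasure expM := ⟨expM_univ⟩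

lemma map_eq_expM {Ω : Type*} [MeasureSpace Ω] [IsProbabilityMeasure (ℙ : Measure Ω)]
    {f : Ω → ℝ} (hf : Measurable f)
    (h : ∀ x : ℝ, 0 ≤ x → ℙ {ω | x < f ω} = ENNReal.ofReal (Real.exp (-x))) :
    (ℙ : Measure Ω).map f = expM := by
  have hmap : ∀ y : ℝ, (ℙ : Measure Ω).map f (Set.Ioi y) = ENNReal.ofReal (Real.exp (-(max y 0))) := by
    intro y
    rw [Measure.map_apply hf measurableSet_Ioi]
    rcases le_or_gt 0 y with hy | hy
    · rw [max_eq_left hy]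
      exact h y hy
    · rw [max_eq_right hy.le]
      have h1 : ℙ (f ⁻¹' Set.Ioi 0) = 1 := by
        have := h 0 le_rfl
        rw [neg_zero, Real.exp_zero, ENNReal.ofReal_one] at this; exact this
      have hle : f ⁻¹' Set.Ioi 0 ⊆ f ⁻¹' Set.Ioi y :=
        Set.preimage_mono (Set.Ioi_subset_Ioi hy.le)
      have : ℙ (f ⁻¹' Set.Ioi y) = 1 :=
        le_antisymm prob_le_one (h1 ▸ measure_mono hle)
      rw [this]; simp
  haveI : IsProbabilityMeasure ((ℙ : Measure Ω).map f) := Measure.isProbabilityMeasure_map hf.aemeasurable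
  refine MeasureTheory.ext_of_generate_finite _
    (BorelSpace.measurable_eq.trans (borel_eq_generateFrom_Ioi ℝ)) isPiSystem_Ioi ?_ ?_
  · rintro s ⟨y, rfl⟩
    rw [hmap, expM_Ioi]
  · rw [expM_univ, measure_univ]

lemma my_integral_exp_mul (k a b : ℝ) (hk : k ≠ 0) :
    ∫ s in a..b, Real.exp (k * s) = (Real.exp (k * b) - Real.exp (k * a)) / k := by
  have D : ∀ t : ℝ, HasDerivAt (fun y : ℝ => Real.exp (k * y) / k) (Real.exp (k * t)) t := by
    intro t
    have h1 : HasDerivAt (fun y : ℝ => k * y) (k * 1) t := (hasDerivAt_id t).const_mul k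
    have h2 := (h1.exp).div_const k
    simpa [mul_comm, mul_div_assoc, mul_div_cancel_left₀ _ hk] using h2
  rw [intervalIntegral.integral_eq_sub_of_hasDerivAt (fun t _ => D t)
    ((Real.continuous_exp.comp (continuous_const.mul continuous_id)).intervalIntegrable a b)]
  ring

lemma prod_tail (u₁ u₂ x : ℝ) (h₁ : 0 < u₁) (h₂ : 0 < u₂) (h₂1 : u₂ < 1) (hx : 0 ≤ x) :
    (expM.prod expM) {p : ℝ × ℝ | x < p.1 / u₁ + p.2 / (u₁ * u₂)} =
      ENNReal.ofReal (Real.exp (-(u₁*x)) +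
        Real.exp (-(u₁*u₂*x)) * (1 - Real.exp (-((1-u₂)*(u₁*x)))) / (1-u₂)) := by
  have hc : 0 < u₁ * u₂ := mul_pos h₁ h₂
  have ha0 : 0 ≤ u₁ * x := mul_nonneg h₁.le hx
  have hS : MeasurableSet {p : ℝ × ℝ | x < p.1 / u₁ + p.2 / (u₁ * u₂)} :=
    measurableSet_lt measurable_const
      ((measurable_fst.div_const u₁).add (measurable_snd.div_const (u₁*u₂)))
  rw [Measure.prod_apply hS]
  have hsec : ∀ s : ℝ, (Prod.mk s ⁻¹' {p : ℝ × ℝ | x < p.1 / u₁ + p.2 / (u₁ * u₂)}) =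
      Set.Ioi ((x - s/u₁) * (u₁*u₂)) := by
    intro s
    ext t
    simp only [Set.mem_preimage, Set.mem_setOf_eq, Set.mem_Ioi, ← lt_div_iff₀ hc,
      sub_lt_iff_lt_add']
  simp_rw [hsec, expM_Ioi]
  rw [expM, lintegral_withDensity_eq_lintegral_mul _
    (by fun_prop : Measurable fun t : ℝ => ENNReal.ofReal (Real.exp (-t)))
    (by fun_prop : Measurable fun s : ℝ =>
       ENNReal.ofReal (Real.exp (-(max ((x - s/u₁) * (u₁*u₂)) 0))))]
  simp only [Pi.mul_apply]
  simp_rw [← ENNReal.ofReal_mul (exp_nonneg _), ← Real.exp_add]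
  set F : ℝ → ℝ := fun s => Real.exp (-s + -(max ((x - s/u₁) * (u₁*u₂)) 0)) with hF
  have hcont : Continuous F := by fun_prop
  have hFint : IntegrableOn F (Set.Ioi 0) := by
    apply Integrable.mono (g := fun s : ℝ => Real.exp (-s))
      (by have := exp_neg_integrableOn_Ioi (0:ℝ) one_pos; simp only [neg_mul, one_mul] at this; exact this)
      hcont.aestronglyMeasurable
    filter_upwards with s
    rw [Real.norm_eq_abs, Real.norm_eq_abs, Real.abs_exp, Real.abs_exp]
    exact Real.exp_le_exp.mpr (by nlinarith [le_max_right ((x - s/u₁) * (u₁*u₂)) (0:ℝ)])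
  rw [← ofReal_integral_eq_lintegral_ofReal hFint
    (Filter.Eventually.of_forall fun s => exp_nonneg _)]
  have hsplit : ∫ s in Set.Ioi (0:ℝ), F s =
      (∫ s in Set.Ioc 0 (u₁*x), F s) + ∫ s in Set.Ioi (u₁*x), F s := by
    rw [← setIntegral_union (Set.Ioc_disjoint_Ioi le_rfl) measurableSet_Ioi
      (hFint.mono_set Set.Ioc_subset_Ioi_self) (hFint.mono_set (Set.Ioi_subset_Ioi ha0)),
      Set.Ioc_union_Ioi_eq_Ioi ha0]
  rw [hsplit]
  have hR : ∫ s in Set.Ioi (u₁*x), F s = Real.exp (-(u₁*x)) := by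
    rw [setIntegral_congr_fun measurableSet_Ioi (g := fun s => Real.exp (-s)) ?_,
      integral_exp_neg_Ioi]
    intro s hs
    have hsx : x - s/u₁ ≤ 0 := by
      rw [sub_nonpos, le_div_iff₀ h₁]
      exact le_of_lt (by rw [Set.mem_Ioi] at hs; linarith [hs])
    have : max ((x - s/u₁) * (u₁*u₂)) 0 = 0 :=
      max_eq_right (mul_nonpos_iff.mpr (Or.inr ⟨hsx, hc.le⟩))
    simp [hF, this]
  have hL : ∫ s in Set.Ioc 0 (u₁*x), F s =
      Real.exp (-(u₁*u₂*x)) * ((Real.exp (-(1-u₂) * (u₁*x)) - Real.exp (-(1-u₂) * 0)) / (-(1-u₂))) := by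
    rw [setIntegral_congr_fun measurableSet_Ioc
      (g := fun s => Real.exp (-(u₁*u₂*x)) * Real.exp (-(1-u₂) * s)) ?_]
    · rw [integral_const_mul, ← intervalIntegral.integral_of_le ha0,
        my_integral_exp_mul _ _ _ (by intro h; apply absurd h; intro h'; nlinarith : -(1-u₂) ≠ 0)]
    · intro s hs
      rw [Set.mem_Ioc] at hs
      have hsx : 0 ≤ x - s/u₁ := by
        rw [sub_nonneg, div_le_iff₀ h₁]
        nlinarith [hs.2]
      have hmax : max ((x - s/u₁) * (u₁*u₂)) 0 = (x - s/u₁) * (u₁*u₂) :=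
        max_eq_left (mul_nonneg hsx hc.le)
      show Real.exp (-s + -(max ((x - s/u₁) * (u₁*u₂)) 0)) =
        Real.exp (-(u₁*u₂*x)) * Real.exp (-(1-u₂) * s)
      rw [hmax, ← Real.exp_add]
      congr 1
      field_simp
      ring
  rw [hR, hL]
  congr 1
  rw [mul_zero, Real.exp_zero]
  rw [show -(1-u₂) * (u₁*x) = -((1-u₂)*(u₁*x)) by ring]
  rw [show Real.exp (-((1-u₂)*(u₁*x))) - 1 = -(1 - Real.exp (-((1-u₂)*(u₁*x)))) from
    (neg_sub 1 _).symm, neg_div_neg_eq]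
  ring

/-- Lemma 5 of the paper: for `u₁, u₂ ∈ (0,1]`, if `E₁, E₂` are i.i.d. standard exponential
and `V` is uniform on `[0,1]`, jointly independent, then
`E₁/u₁ + (E₂/(u₁u₂))·1_{V > u₂}` is exponential with rate `u₁u₂`. -/
theorem stmt3 {Ω : Type*} [MeasureSpace Ω] [IsProbabilityMeasure (ℙ : Measure Ω)]
    (u₁ u₂ : ℝ) (hu₁ : u₁ ∈ Set.Ioc (0:ℝ) 1) (hu₂ : u₂ ∈ Set.Ioc (0:ℝ) 1)
    (E₁ E₂ V : Ω → ℝ)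
    (hmE₁ : Measurable E₁) (hmE₂ : Measurable E₂) (hmV : Measurable V)
    (hindep : iIndepFun ![E₁, E₂, V] ℙ)
    (hE₁ : ∀ x : ℝ, 0 ≤ x → ℙ {ω | x < E₁ ω} = ENNReal.ofReal (Real.exp (-x)))
    (hE₂ : ∀ x : ℝ, 0 ≤ x → ℙ {ω | x < E₂ ω} = ENNReal.ofReal (Real.exp (-x)))
    (hV : ∀ a b : ℝ, 0 ≤ a → a ≤ b → b ≤ 1 →
      ℙ {ω | V ω ∈ Set.Icc a b} = ENNReal.ofReal (b - a)) :
    ∀ x : ℝ, 0 ≤ x →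
      ℙ {ω | x < E₁ ω / u₁ + (E₂ ω / (u₁ * u₂)) * (if u₂ < V ω then 1 else 0)} =
        ENNReal.ofReal (Real.exp (-(u₁ * u₂ * x))) := by
  obtain ⟨hu₁0, hu₁1⟩ := hu₁
  obtain ⟨hu₂0, hu₂1⟩ := hu₂
  intro x hx
  have hc : 0 < u₁ * u₂ := mul_pos hu₁0 hu₂0
  -- V probabilities
  have hsum : ℙ (V ⁻¹' Set.Iic u₂) + ℙ (V ⁻¹' Set.Ioi u₂) = 1 := by
    rw [← measure_union ((Set.Iic_disjoint_Ioi le_rfl).preimage V) (hmV measurableSet_Ioi),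
      ← Set.preimage_union, Set.Iic_union_Ioi, Set.preimage_univ, measure_univ]
  have hlow1 : ENNReal.ofReal u₂ ≤ ℙ (V ⁻¹' Set.Iic u₂) := by
    have h0 := hV 0 u₂ le_rfl hu₂0.le hu₂1
    rw [sub_zero] at h0
    rw [← h0]
    exact measure_mono fun ω hω => hω.2
  have hpt : ℙ {ω | V ω = u₂} = 0 := by
    have h0 := hV u₂ u₂ hu₂0.le le_rfl hu₂1
    rw [sub_self] at h0
    refine le_antisymm ?_ zero_le
    rw [← ENNReal.ofReal_zero, ← h0]
    exact measure_mono fun ω h => by simp [Set.mem_setOf_eq.mp h]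
  have hlow2 : ENNReal.ofReal (1 - u₂) ≤ ℙ (V ⁻¹' Set.Ioi u₂) := by
    have h1 := hV u₂ 1 hu₂0.le hu₂1 le_rfl
    have hsub : {ω | V ω ∈ Set.Icc u₂ 1} ⊆ V ⁻¹' Set.Ioi u₂ ∪ {ω | V ω = u₂} := by
      intro ω hω
      rcases lt_or_eq_of_le hω.1 with h | h
      · exact Or.inl h
      · exact Or.inr h.symm
    calc ENNReal.ofReal (1-u₂) = ℙ {ω | V ω ∈ Set.Icc u₂ 1} := h1.symm
      _ ≤ ℙ (V ⁻¹' Set.Ioi u₂ ∪ {ω | V ω = u₂}) := measure_mono hsub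
      _ ≤ ℙ (V ⁻¹' Set.Ioi u₂) + ℙ {ω | V ω = u₂} := measure_union_le _ _
      _ = ℙ (V ⁻¹' Set.Ioi u₂) := by rw [hpt, add_zero]
  have hofadd : ENNReal.ofReal u₂ + ENNReal.ofReal (1-u₂) = 1 := by
    rw [← ENNReal.ofReal_add hu₂0.le (by linarith)]
    norm_num
  have hVIic : ℙ (V ⁻¹' Set.Iic u₂) = ENNReal.ofReal u₂ := by
    refine le_antisymm ?_ hlow1
    have hle := tsub_le_tsub_left hlow2 (1:ENNReal)
    have ha : ℙ (V ⁻¹' Set.Iic u₂) = 1 - ℙ (V ⁻¹' Set.Ioi u₂) := by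
      rw [← hsum, ENNReal.add_sub_cancel_right (measure_ne_top _ _)]
    have hb : (1:ENNReal) - ENNReal.ofReal (1-u₂) = ENNReal.ofReal u₂ := by
      rw [← hofadd, ENNReal.add_sub_cancel_right ENNReal.ofReal_ne_top]
    rw [ha, ← hb]
    exact hle
  have hVIoi : ℙ (V ⁻¹' Set.Ioi u₂) = ENNReal.ofReal (1 - u₂) := by
    rw [hVIic] at hsum
    exact (ENNReal.add_right_inj ENNReal.ofReal_ne_top).mp (hsum.trans hofadd.symm)
  -- independence
  have hIE1V : IndepFun E₁ V ℙ := hindep.indepFun (show (0:Fin 3) ≠ 2 by decide)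
  have hIE1E2 : IndepFun E₁ E₂ ℙ := hindep.indepFun (show (0:Fin 3) ≠ 1 by decide)
  have hPairV : IndepFun (fun ω => (E₁ ω, E₂ ω)) V ℙ :=
    hindep.indepFun_prodMk (fun i => by fin_cases i <;> [exact hmE₁; exact hmE₂; exact hmV])
      0 1 2 (by decide) (by decide)
  -- set decomposition
  have hS : MeasurableSet {p : ℝ × ℝ | x < p.1 / u₁ + p.2 / (u₁ * u₂)} :=
    measurableSet_lt measurable_const
      ((measurable_fst.div_const u₁).add (measurable_snd.div_const (u₁*u₂)))
  have hTeq : {ω | x < E₁ ω / u₁ + (E₂ ω / (u₁ * u₂)) * (if u₂ < V ω then 1 else 0)} =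
      (E₁ ⁻¹' Set.Ioi (x * u₁) ∩ V ⁻¹' Set.Iic u₂) ∪
      ((fun ω => (E₁ ω, E₂ ω)) ⁻¹' {p : ℝ × ℝ | x < p.1 / u₁ + p.2 / (u₁ * u₂)} ∩
        V ⁻¹' Set.Ioi u₂) := by
    ext ω
    by_cases h : u₂ < V ω
    · simp [h, not_le.mpr h]
    · simp [h, not_lt.mp h, lt_div_iff₀ hu₁0]
  rw [hTeq, measure_union
    (Disjoint.mono Set.inter_subset_right Set.inter_subset_right
      ((Set.Iic_disjoint_Ioi le_rfl).preimage V))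
    (((hmE₁.prodMk hmE₂) hS).inter (hmV measurableSet_Ioi)),
    hIE1V.measure_inter_preimage_eq_mul _ _ measurableSet_Ioi measurableSet_Iic,
    hPairV.measure_inter_preimage_eq_mul _ _ hS measurableSet_Ioi]
  have hE1val : ℙ (E₁ ⁻¹' Set.Ioi (x*u₁)) = ENNReal.ofReal (Real.exp (-(x*u₁))) :=
    hE₁ (x*u₁) (mul_nonneg hx hu₁0.le)
  have hmap : (ℙ : Measure Ω).map (fun ω => (E₁ ω, E₂ ω)) = expM.prod expM := by
    rw [(indepFun_iff_map_prod_eq_prod_map_map hmE₁.aemeasurable hmE₂.aemeasurable).mp hIE1E2,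
      map_eq_expM hmE₁ hE₁, map_eq_expM hmE₂ hE₂]
  have hpairval : ℙ ((fun ω => (E₁ ω, E₂ ω)) ⁻¹' {p : ℝ × ℝ | x < p.1/u₁ + p.2/(u₁*u₂)}) =
      (expM.prod expM) {p : ℝ × ℝ | x < p.1/u₁ + p.2/(u₁*u₂)} := by
    rw [← hmap, Measure.map_apply (hmE₁.prodMk hmE₂) hS]
  rw [hE1val, hVIic, hVIoi, hpairval]
  rcases eq_or_lt_of_le hu₂1 with h1 | h1
  · subst h1
    simp only [sub_self, ENNReal.ofReal_zero, mul_zero, add_zero, ENNReal.ofReal_one, mul_one]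
    ring_nf
  · rw [prod_tail u₁ u₂ x hu₁0 hu₂0 h1 hx]
    have h1q : Real.exp (-((1-u₂)*(u₁*x))) ≤ 1 :=
      Real.exp_le_one_iff.mpr (neg_nonpos.mpr (mul_nonneg (by linarith) (mul_nonneg hu₁0.le hx)))
    have hR0 : 0 ≤ Real.exp (-(u₁*x)) +
        Real.exp (-(u₁*u₂*x)) * (1 - Real.exp (-((1-u₂)*(u₁*x)))) / (1-u₂) :=
      add_nonneg (exp_nonneg _)
        (div_nonneg (mul_nonneg (exp_nonneg _) (by linarith)) (by linarith))
    rw [← ENNReal.ofReal_mul (exp_nonneg _), ← ENNReal.ofReal_mul hR0,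
      ← ENNReal.ofReal_add (mul_nonneg (exp_nonneg _) hu₂0.le)
        (mul_nonneg hR0 (by linarith))]
    congr 1
    have hEE : Real.exp (-(u₁*u₂*x)) * Real.exp (-((1-u₂)*(u₁*x))) = Real.exp (-(u₁*x)) := by
      rw [← Real.exp_add]
      congr 1
      ring
    have hxu : Real.exp (-(x*u₁)) = Real.exp (-(u₁*x)) := by rw [mul_comm]
    rw [hxu]
    have hk : (1:ℝ) - u₂ ≠ 0 := by linarith
    field_simp
    ring_nf
    have hEE2 : Real.exp (-(u₁*x*u₂)) * Real.exp (-(u₁*x) + u₁*x*u₂) = Real.exp (-(u₁*x)) := by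
      rw [← Real.exp_add]; congr 1; ring
    linarith [hEE2]
end

section
/- Let t > 0, and let μ and ν be finite Borel measures on the interval [0,t]. If ∫_{[0,t]} p_k(s) dμ(s) = ∫_{[0,t]} p_k(s) dν(s) for every integer k ≥ 0, then μ = ν. (Equivalently, the linear span of the functions p_k restricted to [0,t] is dense in C([0,t]).) -/
open MeasureTheory ProbabilityTheory Real

open MeasureTheory ProbabilityTheory Real

lemma prod_X_add_C_eq (k : ℕ) :
    (∏ i ∈ Finset.range k, (Polynomial.X + Polynomial.C (i : ℝ))) = ascPochhammer ℝ k := by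
  induction k with
  | zero => simp [ascPochhammer]
  | succ n ih =>
      rw [Finset.prod_range_succ, ih, ascPochhammer_succ_right, Polynomial.C_eq_natCast]

lemma stirling1_eq_coeff (k j : ℕ) : stirling1 k j = (ascPochhammer ℝ k).coeff j := by
  rw [stirling1, prod_X_add_C_eq]

lemma stirling1_eq_natCast (k j : ℕ) : stirling1 k j = ((ascPochhammer ℕ k).coeff j : ℝ) := by
  rw [stirling1_eq_coeff, ← ascPochhammer_map (Nat.castRingHom ℝ) k, Polynomial.coeff_map]
  rfl

lemma stirling1_nonneg (k j : ℕ) : 0 ≤ stirling1 k j := by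
  rw [stirling1_eq_natCast]; positivity

lemma stirling1_eq_zero_of_lt {k j : ℕ} (h : k < j) : stirling1 k j = 0 := by
  rw [stirling1_eq_coeff]
  apply Polynomial.coeff_eq_zero_of_natDegree_lt
  rwa [ascPochhammer_natDegree]

lemma stirling1_le_factorial (k j : ℕ) : stirling1 k j ≤ (Nat.factorial k : ℝ) := by
  rw [stirling1_eq_natCast]
  have h : (ascPochhammer ℕ k).coeff j ≤ Nat.factorial k := by
    rcases le_or_gt j k with hj | hj
    · have := Polynomial.eval_eq_sum_range (p := ascPochhammer ℕ k) (1 : ℕ)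
      rw [ascPochhammer_natDegree, ascPochhammer_nat_eq_ascFactorial, Nat.one_ascFactorial] at this
      calc (ascPochhammer ℕ k).coeff j = (ascPochhammer ℕ k).coeff j * 1 ^ j := by simp
        _ ≤ ∑ i ∈ Finset.range (k+1), (ascPochhammer ℕ k).coeff i * 1 ^ i :=
            Finset.single_le_sum (f := fun i => (ascPochhammer ℕ k).coeff i * 1 ^ i)
              (fun i _ => Nat.zero_le _) (Finset.mem_range.2 (Nat.lt_succ_of_le hj))
        _ = Nat.factorial k := this.symm
    · rw [Polynomial.coeff_eq_zero_of_natDegree_lt]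
      · exact Nat.zero_le _
      · rwa [ascPochhammer_natDegree]
  exact_mod_cast h

lemma sum_stirling1_mul_pow (k : ℕ) (x : ℝ) :
    ∑ j ∈ Finset.range (k+1), stirling1 k j * x ^ j = (ascPochhammer ℝ k).eval x := by
  have h := Polynomial.eval_eq_sum_range (p := ascPochhammer ℝ k) x
  rw [ascPochhammer_natDegree] at h
  rw [h]
  exact Finset.sum_congr rfl fun j _ => by rw [stirling1_eq_coeff]

lemma asc_eval_nat (k m : ℕ) :
    (ascPochhammer ℝ k).eval ((m : ℝ)) = (Nat.ascFactorial m k : ℝ) := by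
  rw [← ascPochhammer_eval_cast, ascPochhammer_nat_eq_ascFactorial]

lemma choose_le_two_pow (n r : ℕ) : n.choose r ≤ 2 ^ n := by
  rcases le_or_gt r n with h | h
  · calc n.choose r ≤ ∑ m ∈ Finset.range (n+1), n.choose m :=
        Finset.single_le_sum (f := fun m => n.choose m) (fun i _ => Nat.zero_le _)
          (Finset.mem_range.2 (Nat.lt_succ_of_le h))
      _ = 2 ^ n := Nat.sum_range_choose n
  · rw [Nat.choose_eq_zero_of_lt h]; exact Nat.zero_le _

lemma ascFactorial_le (m k : ℕ) :
    (Nat.ascFactorial m k : ℝ) ≤ (Nat.factorial k : ℝ) * 2 ^ (m + k) := by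
  have h : Nat.ascFactorial m k ≤ Nat.factorial k * 2 ^ (m + k) := by
    rw [Nat.ascFactorial_eq_factorial_mul_choose']
    refine Nat.mul_le_mul_left _ ?_
    calc (m + k - 1).choose k ≤ 2 ^ (m + k - 1) := choose_le_two_pow _ _
      _ ≤ 2 ^ (m + k) := Nat.pow_le_pow_right (by norm_num) (Nat.sub_le _ _)
  exact_mod_cast h

/-- The nonnegative dominating double family. -/
lemma rowsummable (m : ℕ) (s : ℝ) (k : ℕ) :
    Summable (fun j => s ^ k / (Nat.factorial k : ℝ) * (stirling1 k j / (Nat.factorial k : ℝ))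
      * (m : ℝ) ^ j) := by
  apply summable_of_ne_finset_zero (s := Finset.range (k+1))
  intro j hj
  rw [stirling1_eq_zero_of_lt (by simpa using Finset.mem_range.not.mp hj)]
  simp

lemma rowsum_eq (m : ℕ) (s : ℝ) (k : ℕ) :
    ∑' j, s ^ k / (Nat.factorial k : ℝ) * (stirling1 k j / (Nat.factorial k : ℝ))
      * (m : ℝ) ^ j
    = s ^ k / ((Nat.factorial k : ℝ) * (Nat.factorial k : ℝ)) * (Nat.ascFactorial m k : ℝ) := by
  rw [tsum_eq_sum (s := Finset.range (k+1))
    (fun j hj => by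
      rw [stirling1_eq_zero_of_lt (by simpa using Finset.mem_range.not.mp hj)]; simp)]
  rw [← asc_eval_nat, ← sum_stirling1_mul_pow, Finset.mul_sum]
  refine Finset.sum_congr rfl fun j _ => by
    field_simp

lemma colsummable (m : ℕ) {s : ℝ} (hs : 0 ≤ s) :
    Summable (fun k => s ^ k / ((Nat.factorial k : ℝ) * (Nat.factorial k : ℝ))
      * (Nat.ascFactorial m k : ℝ)) := by
  have h2 : Summable (fun k => (2:ℝ) ^ m * ((2 * s) ^ k / (Nat.factorial k : ℝ))) :=
    (Real.summable_pow_div_factorial (2*s)).mul_left _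
  refine Summable.of_nonneg_of_le (fun k => by positivity) (fun k => ?_) h2
  have hfac : (0:ℝ) < (Nat.factorial k : ℝ) := by positivity
  calc s ^ k / ((Nat.factorial k : ℝ) * (Nat.factorial k : ℝ)) * (Nat.ascFactorial m k : ℝ)
      ≤ s ^ k / ((Nat.factorial k : ℝ) * (Nat.factorial k : ℝ))
        * ((Nat.factorial k : ℝ) * 2 ^ (m + k)) := by
        apply mul_le_mul_of_nonneg_left (ascFactorial_le m k) (by positivity)
    _ = (2:ℝ) ^ m * ((2 * s) ^ k / (Nat.factorial k : ℝ)) := by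
        rw [pow_add, mul_pow]
        field_simp

lemma summable_G (m : ℕ) {s : ℝ} (hs : 0 ≤ s) :
    Summable (fun p : ℕ × ℕ =>
      s ^ p.1 / (Nat.factorial p.1 : ℝ) * (stirling1 p.1 p.2 / (Nat.factorial p.1 : ℝ))
        * (m : ℝ) ^ p.2) := by
  rw [summable_prod_of_nonneg (fun p => by
    have := stirling1_nonneg p.1 p.2; positivity)]
  constructor
  · exact fun k => rowsummable m s k
  · simpa [rowsum_eq m s] using colsummable m hs

lemma term_abs_le (j k : ℕ) (s : ℝ) :
    ‖s ^ k / (Nat.factorial k : ℝ) * (stirling1 k j / (Nat.factorial k : ℝ))‖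
      ≤ |s| ^ k / (Nat.factorial k : ℝ) := by
  have hfac : (0:ℝ) < (Nat.factorial k : ℝ) := by positivity
  have h1 : |stirling1 k j / (Nat.factorial k : ℝ)| ≤ 1 := by
    rw [abs_div, abs_of_nonneg (stirling1_nonneg k j), abs_of_pos hfac,
      div_le_one hfac]
    exact stirling1_le_factorial k j
  calc ‖s ^ k / (Nat.factorial k : ℝ) * (stirling1 k j / (Nat.factorial k : ℝ))‖
      = |s ^ k / (Nat.factorial k : ℝ)| * |stirling1 k j / (Nat.factorial k : ℝ)| := abs_mul _ _
    _ ≤ |s ^ k / (Nat.factorial k : ℝ)| * 1 :=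
        mul_le_mul_of_nonneg_left h1 (abs_nonneg _)
    _ = |s| ^ k / (Nat.factorial k : ℝ) := by
        rw [mul_one, abs_div, abs_pow, abs_of_pos hfac]

lemma summable_pfn_terms (j : ℕ) (s : ℝ) :
    Summable (fun k => s ^ k / (Nat.factorial k : ℝ) * (stirling1 k j / (Nat.factorial k : ℝ))) := by
  apply Summable.of_norm
  exact Summable.of_nonneg_of_le (fun k => norm_nonneg _) (fun k => term_abs_le j k s)
    (Real.summable_pow_div_factorial |s|)

lemma pfn_continuous (j : ℕ) : Continuous (pfn j) := by
  apply (Real.continuous_exp.comp continuous_neg).mul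
  rw [continuous_iff_continuousAt]
  intro s₀
  have hball : ContinuousOn
      (fun s => ∑' k, s ^ k / (Nat.factorial k : ℝ) * (stirling1 k j / (Nat.factorial k : ℝ)))
      (Metric.ball 0 (|s₀| + 1)) := by
    apply continuousOn_tsum (u := fun k => (|s₀| + 1) ^ k / (Nat.factorial k : ℝ))
    · exact fun k => (Continuous.continuousOn (by continuity))
    · exact Real.summable_pow_div_factorial _
    · intro k s hs
      refine (term_abs_le j k s).trans ?_
      have hsle : |s| ≤ |s₀| + 1 := by
        simp only [Metric.mem_ball, Real.dist_eq, sub_zero] at hs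
        linarith
      gcongr
  exact hball.continuousAt (Metric.isOpen_ball.mem_nhds (by
    simp [Real.dist_eq]))

lemma pfn_nonneg (j : ℕ) {s : ℝ} (hs : 0 ≤ s) : 0 ≤ pfn j s := by
  apply mul_nonneg (Real.exp_pos _).le
  apply tsum_nonneg
  intro k
  have := stirling1_nonneg k j
  positivity

noncomputable def Bfn (t : ℝ) (j : ℕ) : ℝ :=
  ∑' k : ℕ, t ^ k / (Nat.factorial k : ℝ) * (stirling1 k j / (Nat.factorial k : ℝ))

lemma pfn_le_B {t : ℝ} (j : ℕ) {s : ℝ} (hs : s ∈ Set.Icc 0 t) : pfn j s ≤ Bfn t j := by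
  obtain ⟨hs0, hst⟩ := hs
  have hsum_s := summable_pfn_terms j s
  have hsum_t := summable_pfn_terms j t
  have hts : ∑' k, s ^ k / (Nat.factorial k : ℝ) * (stirling1 k j / (Nat.factorial k : ℝ))
      ≤ Bfn t j := by
    apply Summable.tsum_le_tsum _ hsum_s hsum_t
    intro k
    have h1 := stirling1_nonneg k j
    gcongr
  have hnn : 0 ≤ ∑' k, s ^ k / (Nat.factorial k : ℝ) * (stirling1 k j / (Nat.factorial k : ℝ)) :=
    tsum_nonneg fun k => by have := stirling1_nonneg k j; positivity
  calc pfn j s ≤ 1 * ∑' k, s ^ k / (Nat.factorial k : ℝ)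
        * (stirling1 k j / (Nat.factorial k : ℝ)) := by
        unfold pfn
        apply mul_le_mul_of_nonneg_right _ hnn
        exact Real.exp_le_one_iff.mpr (by linarith)
    _ ≤ Bfn t j := by rw [one_mul]; exact hts

lemma B_mul_pow_eq (m : ℕ) (t : ℝ) (j : ℕ) :
    Bfn t j * (m:ℝ) ^ j = ∑' k, t ^ k / (Nat.factorial k : ℝ)
      * (stirling1 k j / (Nat.factorial k : ℝ)) * (m:ℝ) ^ j := by
  rw [Bfn, tsum_mul_right]

lemma summable_B_mul_pow (m : ℕ) {t : ℝ} (ht : 0 ≤ t) :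
    Summable (fun j => Bfn t j * (m:ℝ) ^ j) := by
  have h := (summable_G m ht).prod_symm
  have h2 := h.prod
  simp only [Prod.snd_swap, Prod.fst_swap] at h2
  refine h2.congr fun j => ?_
  rw [B_mul_pow_eq]

lemma pfn_mul_pow_abs_le (m : ℕ) (x : ℝ) (hx : |x| ≤ m) {t s : ℝ} (hs : s ∈ Set.Icc 0 t)
    (j : ℕ) : ‖pfn j s * x ^ j‖ ≤ Bfn t j * (m:ℝ) ^ j := by
  rw [norm_mul, norm_pow, Real.norm_eq_abs, Real.norm_eq_abs,
    abs_of_nonneg (pfn_nonneg j hs.1)]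
  have hm : (0:ℝ) ≤ m := Nat.cast_nonneg m
  apply mul_le_mul (pfn_le_B j hs) (pow_le_pow_left₀ (abs_nonneg x) hx j)
    (by positivity) ((pfn_nonneg j hs.1).trans (pfn_le_B j hs))

lemma summable_pfn_mul_pow (m : ℕ) (x : ℝ) (hx : |x| ≤ m) {t s : ℝ} (hs : s ∈ Set.Icc 0 t) :
    Summable (fun j => pfn j s * x ^ j) := by
  apply Summable.of_norm
  exact Summable.of_nonneg_of_le (fun j => norm_nonneg _)
    (fun j => pfn_mul_pow_abs_le m x hx hs j) (summable_B_mul_pow m (hs.1.trans hs.2))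

-- the double family with sign x
lemma summable_F (m : ℕ) (x : ℝ) (hx : |x| ≤ m) {s : ℝ} (hs : 0 ≤ s) :
    Summable (fun p : ℕ × ℕ =>
      s ^ p.1 / (Nat.factorial p.1 : ℝ) * (stirling1 p.1 p.2 / (Nat.factorial p.1 : ℝ))
        * x ^ p.2) := by
  apply Summable.of_norm
  refine Summable.of_nonneg_of_le (fun p => norm_nonneg _) (fun p => ?_) (summable_G m hs)
  have h1 := stirling1_nonneg p.1 p.2
  have hfac : (0:ℝ) < (Nat.factorial p.1 : ℝ) := by positivity
  rw [norm_mul, norm_mul, norm_div, norm_div, norm_pow, norm_pow]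
  simp only [Real.norm_eq_abs, abs_of_nonneg hs, abs_of_nonneg h1, abs_of_pos hfac]
  gcongr

lemma inner_tsum_eq (k : ℕ) (s x : ℝ) :
    ∑' j, s ^ k / (Nat.factorial k : ℝ) * (stirling1 k j / (Nat.factorial k : ℝ)) * x ^ j
    = s ^ k / ((Nat.factorial k : ℝ) * (Nat.factorial k : ℝ)) * (ascPochhammer ℝ k).eval x := by
  rw [tsum_eq_sum (s := Finset.range (k+1))
    (fun j hj => by
      rw [stirling1_eq_zero_of_lt (by simpa using Finset.mem_range.not.mp hj)]; simp)]
  rw [← sum_stirling1_mul_pow, Finset.mul_sum]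
  refine Finset.sum_congr rfl fun j _ => by
    field_simp

/-- Key generating identity. -/
lemma tsum_pfn_mul_pow (m : ℕ) (x : ℝ) (hx : |x| ≤ m) {s : ℝ} (hs : 0 ≤ s) :
    ∑' j, pfn j s * x ^ j
      = Real.exp (-s) * ∑' k, s ^ k / ((Nat.factorial k : ℝ) * (Nat.factorial k : ℝ))
          * (ascPochhammer ℝ k).eval x := by
  have h1 : ∀ j, pfn j s * x ^ j
      = Real.exp (-s) * ∑' k, s ^ k / (Nat.factorial k : ℝ)
          * (stirling1 k j / (Nat.factorial k : ℝ)) * x ^ j := by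
    intro j
    rw [pfn, mul_assoc]
    congr 1
    rw [← tsum_mul_right]
  simp only [h1]
  rw [tsum_mul_left]
  congr 1
  have hcomm := Summable.tsum_comm (f := fun k j =>
    s ^ k / (Nat.factorial k : ℝ) * (stirling1 k j / (Nat.factorial k : ℝ)) * x ^ j)
    (summable_F m x hx hs)
  rw [hcomm]
  exact tsum_congr fun k => inner_tsum_eq k s x

lemma asc_eval_neg_of_lt {m k : ℕ} (h : m < k) :
    (ascPochhammer ℝ k).eval (-(m:ℝ)) = 0 := by
  induction k with
  | zero => omega
  | succ n ih =>
      rw [ascPochhammer_succ_eval]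
      rcases Nat.lt_or_ge m n with hmn | hmn
      · rw [ih hmn, zero_mul]
      · have : m = n := by omega
        subst this
        simp

lemma asc_eval_neg_le {m k : ℕ} (h : k ≤ m) :
    (ascPochhammer ℝ k).eval (-(m:ℝ)) = (-1:ℝ)^k * (Nat.descFactorial m k : ℝ) := by
  induction k with
  | zero => simp
  | succ n ih =>
      have hn : n ≤ m := Nat.le_of_succ_le h
      rw [ascPochhammer_succ_eval, ih hn, Nat.descFactorial_succ]
      have hc : ((m - n : ℕ) : ℝ) = (m:ℝ) - n := by
        rw [Nat.cast_sub hn]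
      push_cast [hc]
      ring

lemma asc_eval_neg_self (m : ℕ) :
    (ascPochhammer ℝ m).eval (-(m:ℝ)) = (-1:ℝ)^m * (Nat.factorial m : ℝ) := by
  rw [asc_eval_neg_le (le_refl m), Nat.descFactorial_self]

/-- series truncates at `m` for `x = -m`. -/
lemma tsum_pfn_neg (m : ℕ) {s : ℝ} (hs : 0 ≤ s) :
    ∑' j, pfn j s * (-(m:ℝ)) ^ j
      = Real.exp (-s) * ∑ k ∈ Finset.range (m+1),
          s ^ k / ((Nat.factorial k : ℝ) * (Nat.factorial k : ℝ))
            * (ascPochhammer ℝ k).eval (-(m:ℝ)) := by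
  rw [tsum_pfn_mul_pow m (-(m:ℝ)) (by simp) hs]
  congr 1
  apply tsum_eq_sum
  intro k hk
  rw [asc_eval_neg_of_lt (by simpa using Finset.mem_range.not.mp hk), mul_zero]

lemma integrableOn_of_continuous {ρ : Measure ℝ} [IsFiniteMeasure ρ] {f : ℝ → ℝ}
    (hf : Continuous f) {E : Set ℝ} (hE : IsCompact E) (hEm : MeasurableSet E) :
    IntegrableOn f E ρ := by
  rcases hE.exists_bound_of_continuousOn hf.continuousOn with ⟨C, hC⟩
  apply Measure.integrableOn_of_bounded (M := C) (measure_ne_top ρ E)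
    hf.aestronglyMeasurable
  filter_upwards [ae_restrict_mem hEm] with s hs using hC s hs

/-- Analytic core of Theorem 2: finite Borel measures on `[0,t]` are determined by their
integrals against the functions `p_k`. -/
theorem stmt8 (t : ℝ) (ht : 0 < t) (μ ν : Measure ℝ)
    [IsFiniteMeasure μ] [IsFiniteMeasure ν]
    (hμ : μ (Set.Icc 0 t)ᶜ = 0) (hν : ν (Set.Icc 0 t)ᶜ = 0)
    (h : ∀ k : ℕ, ∫ s in Set.Icc 0 t, pfn k s ∂μ = ∫ s in Set.Icc 0 t, pfn k s ∂ν) :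
    μ = ν := by
  set E : Set ℝ := Set.Icc 0 t with hE
  have hEm : MeasurableSet E := measurableSet_Icc
  have hEc : IsCompact E := isCompact_Icc
  -- the truncated generating function
  set g : ℕ → ℝ → ℝ := fun m s => Real.exp (-s) * ∑ k ∈ Finset.range (m+1),
      s ^ k / ((Nat.factorial k : ℝ) * (Nat.factorial k : ℝ))
        * (ascPochhammer ℝ k).eval (-(m:ℝ)) with hg
  -- Step 1: dominated convergence to equate ∫ g m dμ with ∫ g m dν
  have main : ∀ m : ℕ, ∫ s in E, g m s ∂μ = ∫ s in E, g m s ∂ν := by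
    intro m
    have habs : |(-(m:ℝ))| ≤ (m:ℕ) := by simp
    have key : ∀ (ρ : Measure ℝ) [IsFiniteMeasure ρ],
        HasSum (fun j => ∫ s in E, pfn j s * (-(m:ℝ)) ^ j ∂ρ) (∫ s in E, g m s ∂ρ) := by
      intro ρ _
      apply hasSum_integral_of_dominated_convergence (fun j _ => Bfn t j * (m:ℝ) ^ j)
      · exact fun j => ((pfn_continuous j).mul continuous_const).aestronglyMeasurable
      · intro j
        filter_upwards [ae_restrict_mem hEm] with s hs
        exact pfn_mul_pow_abs_le m _ habs hs j
      · exact ae_of_all _ fun s => summable_B_mul_pow m ht.le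
      · exact integrable_const _
      · filter_upwards [ae_restrict_mem hEm] with s hs
        rw [hg]
        simp only
        rw [← tsum_pfn_neg m hs.1]
        exact (summable_pfn_mul_pow m _ habs hs).hasSum
    have hfun : (fun j => ∫ s in E, pfn j s * (-(m:ℝ)) ^ j ∂μ)
        = fun j => ∫ s in E, pfn j s * (-(m:ℝ)) ^ j ∂ν := by
      funext j
      rw [integral_mul_const, integral_mul_const, h j]
    exact ((hfun ▸ key μ).unique (key ν))
  -- Step 2: expand into moments
  have hint : ∀ (ρ : Measure ℝ) [IsFiniteMeasure ρ] (k : ℕ),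
      IntegrableOn (fun s => Real.exp (-s) * s ^ k) E ρ := by
    intro ρ _ k
    exact integrableOn_of_continuous (by continuity) hEc hEm
  have expand : ∀ (ρ : Measure ℝ) [IsFiniteMeasure ρ] (m : ℕ),
      ∫ s in E, g m s ∂ρ = ∑ k ∈ Finset.range (m+1),
        (ascPochhammer ℝ k).eval (-(m:ℝ)) / ((Nat.factorial k : ℝ) * (Nat.factorial k : ℝ))
          * ∫ s in E, Real.exp (-s) * s ^ k ∂ρ := by
    intro ρ _ m
    have : ∀ s : ℝ, g m s = ∑ k ∈ Finset.range (m+1),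
        (ascPochhammer ℝ k).eval (-(m:ℝ)) / ((Nat.factorial k : ℝ) * (Nat.factorial k : ℝ))
          * (Real.exp (-s) * s ^ k) := by
      intro s
      rw [hg]
      simp only
      rw [Finset.mul_sum]
      exact Finset.sum_congr rfl fun k _ => by ring
    simp only [this]
    rw [integral_finset_sum]
    · exact Finset.sum_congr rfl fun k _ => integral_const_mul _ _
    · exact fun k _ => (hint ρ k).const_mul _
  -- Step 3: strong induction for moments
  have mom : ∀ n : ℕ, ∫ s in E, Real.exp (-s) * s ^ n ∂μ = ∫ s in E, Real.exp (-s) * s ^ n ∂ν := by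
    intro n
    induction n using Nat.strong_induction_on with
    | _ n ih =>
      have hm := main n
      rw [expand μ n, expand ν n, Finset.sum_range_succ, Finset.sum_range_succ] at hm
      have heq : ∑ k ∈ Finset.range n,
          (ascPochhammer ℝ k).eval (-(n:ℝ)) / ((Nat.factorial k : ℝ) * (Nat.factorial k : ℝ))
            * ∫ s in E, Real.exp (-s) * s ^ k ∂μ
          = ∑ k ∈ Finset.range n,
          (ascPochhammer ℝ k).eval (-(n:ℝ)) / ((Nat.factorial k : ℝ) * (Nat.factorial k : ℝ))
            * ∫ s in E, Real.exp (-s) * s ^ k ∂ν :=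
        Finset.sum_congr rfl fun k hk => by rw [ih k (Finset.mem_range.mp hk)]
      rw [heq] at hm
      have hc : (ascPochhammer ℝ n).eval (-(n:ℝ))
          / ((Nat.factorial n : ℝ) * (Nat.factorial n : ℝ)) ≠ 0 := by
        rw [asc_eval_neg_self]
        have : (Nat.factorial n : ℝ) ≠ 0 := Nat.cast_ne_zero.mpr (Nat.factorial_ne_zero n)
        have h2 : ((-1:ℝ))^n ≠ 0 := by
          apply pow_ne_zero; norm_num
        positivity
      exact mul_left_cancel₀ hc (by linarith)
  -- Step 4: polynomials
  have hpoly : ∀ P : Polynomial ℝ,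
      ∫ s in E, Real.exp (-s) * P.eval s ∂μ = ∫ s in E, Real.exp (-s) * P.eval s ∂ν := by
    intro P
    have hrw : ∀ (s : ℝ), Real.exp (-s) * P.eval s
        = ∑ k ∈ Finset.range (P.natDegree + 1), P.coeff k * (Real.exp (-s) * s ^ k) := by
      intro s
      rw [Polynomial.eval_eq_sum_range, Finset.mul_sum]
      exact Finset.sum_congr rfl fun k _ => by ring
    simp only [hrw]
    rw [integral_finset_sum _ (fun k _ => (hint μ k).const_mul _),
      integral_finset_sum _ (fun k _ => (hint ν k).const_mul _)]
    exact Finset.sum_congr rfl fun k _ => by rw [integral_const_mul, integral_const_mul, mom k]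
  -- Step 5: continuous functions via Weierstrass
  have hcont : ∀ f : ℝ → ℝ, Continuous f → ∫ s in E, f s ∂μ = ∫ s in E, f s ∂ν := by
    intro f hf
    have hC : (0:ℝ) ≤ (μ E).toReal + (ν E).toReal := by positivity
    have hbound : ∀ ε : ℝ, 0 < ε →
        |(∫ s in E, f s ∂μ) - ∫ s in E, f s ∂ν| ≤ ε * ((μ E).toReal + (ν E).toReal) := by
      intro ε hε
      obtain ⟨P, hP⟩ := exists_polynomial_near_of_continuousOn 0 t
        (fun s => Real.exp s * f s) ((Real.continuous_exp.mul hf).continuousOn) ε hε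
      set φ : ℝ → ℝ := fun s => Real.exp (-s) * P.eval s with hφ
      have hφc : Continuous φ :=
        (Real.continuous_exp.comp continuous_neg).mul P.continuous
      have hdiff : ∀ s ∈ E, ‖f s - φ s‖ ≤ ε := by
        intro s hs
        have hee : Real.exp (-s) * (Real.exp s * f s) = f s := by
          rw [← mul_assoc, ← Real.exp_add]; simp
        have h1 : f s - φ s = Real.exp (-s) * (Real.exp s * f s - P.eval s) := by
          rw [hφ, mul_sub, hee]
        rw [h1, norm_mul, Real.norm_eq_abs, Real.norm_eq_abs,
          abs_of_pos (Real.exp_pos (-s))]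
        have h2 : Real.exp (-s) ≤ 1 := Real.exp_le_one_iff.mpr (by linarith [hs.1])
        have h3 : |Real.exp s * f s - P.eval s| ≤ ε := by
          have := hP s hs
          rw [abs_sub_comm] at this
          linarith [this]
        calc Real.exp (-s) * |Real.exp s * f s - P.eval s| ≤ 1 * ε := by
              apply mul_le_mul h2 h3 (abs_nonneg _) zero_le_one
          _ = ε := one_mul ε
      have hfint : ∀ (ρ : Measure ℝ) [IsFiniteMeasure ρ], IntegrableOn f E ρ := by
        intro ρ _; exact integrableOn_of_continuous hf hEc hEm
      have hφint : ∀ (ρ : Measure ℝ) [IsFiniteMeasure ρ], IntegrableOn φ E ρ := by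
        intro ρ _; exact integrableOn_of_continuous hφc hEc hEm
      have hμ1 : ‖∫ s in E, (f s - φ s) ∂μ‖ ≤ ε * (μ E).toReal :=
        norm_setIntegral_le_of_norm_le_const (measure_lt_top μ E) hdiff
      have hν1 : ‖∫ s in E, (f s - φ s) ∂ν‖ ≤ ε * (ν E).toReal :=
        norm_setIntegral_le_of_norm_le_const (measure_lt_top ν E) hdiff
      have hsplitμ : ∫ s in E, (f s - φ s) ∂μ = (∫ s in E, f s ∂μ) - ∫ s in E, φ s ∂μ :=
        integral_sub (hfint μ) (hφint μ)
      have hsplitν : ∫ s in E, (f s - φ s) ∂ν = (∫ s in E, f s ∂ν) - ∫ s in E, φ s ∂ν :=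
        integral_sub (hfint ν) (hφint ν)
      have hphieq : ∫ s in E, φ s ∂μ = ∫ s in E, φ s ∂ν := hpoly P
      rw [hsplitμ] at hμ1
      rw [hsplitν] at hν1
      rw [Real.norm_eq_abs] at hμ1 hν1
      calc |(∫ s in E, f s ∂μ) - ∫ s in E, f s ∂ν|
          = |((∫ s in E, f s ∂μ) - ∫ s in E, φ s ∂μ)
              - ((∫ s in E, f s ∂ν) - ∫ s in E, φ s ∂ν)| := by
              rw [hphieq]; congr 1; ring
        _ ≤ |(∫ s in E, f s ∂μ) - ∫ s in E, φ s ∂μ|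
              + |(∫ s in E, f s ∂ν) - ∫ s in E, φ s ∂ν| := abs_sub _ _
        _ ≤ ε * (μ E).toReal + ε * (ν E).toReal := add_le_add hμ1 hν1
        _ = ε * ((μ E).toReal + (ν E).toReal) := by ring
    by_contra hne
    have hD : 0 < |(∫ s in E, f s ∂μ) - ∫ s in E, f s ∂ν| := by
      rw [abs_pos, sub_ne_zero]
      exact hne
    set D := |(∫ s in E, f s ∂μ) - ∫ s in E, f s ∂ν|
    set C := (μ E).toReal + (ν E).toReal
    have hε : 0 < D / (2 * (C + 1)) := by positivity
    have := hbound _ hε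
    have hlt : D / (2 * (C + 1)) * C < D := by
      rw [div_mul_eq_mul_div, div_lt_iff₀ (by positivity)]
      nlinarith
    linarith
  -- Step 6: conclude
  have hrestμ : μ.restrict E = μ := by
    apply Measure.restrict_eq_self_of_ae_mem
    rw [ae_iff]
    exact hμ
  have hrestν : ν.restrict E = ν := by
    apply Measure.restrict_eq_self_of_ae_mem
    rw [ae_iff]
    exact hν
  apply ext_of_forall_lintegral_eq_of_IsFiniteMeasure
  intro f
  have h1 : (∫⁻ x, (f x : ENNReal) ∂μ).toReal = (∫⁻ x, (f x : ENNReal) ∂ν).toReal := by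
    rw [BoundedContinuousFunction.toReal_lintegral_coe_eq_integral,
      BoundedContinuousFunction.toReal_lintegral_coe_eq_integral]
    rw [← hrestμ, ← hrestν]
    exact hcont _ (NNReal.continuous_coe.comp f.continuous)
  exact (ENNReal.toReal_eq_toReal_iff'
    (BoundedContinuousFunction.lintegral_lt_top_of_nnreal μ f).ne
    (BoundedContinuousFunction.lintegral_lt_top_of_nnreal ν f).ne).mp h1
end

section
/- For every integer j ≥ 1, the function p_j satisfies p_j(0) = 0 and, for all t > 0, the differential recursion p_j'(t) = −p_j(t) + (1/t)·∫_0^t p_{j−1}(s) ds. -/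
open MeasureTheory ProbabilityTheory Real

open MeasureTheory ProbabilityTheory Real

-- Stirling recurrences
lemma stirling1_succ (k j : ℕ) :
    stirling1 (k+1) (j+1) = (k:ℝ) * stirling1 k (j+1) + stirling1 k j := by
  unfold stirling1
  rw [Finset.prod_range_succ, mul_add, Polynomial.coeff_add, Polynomial.coeff_mul_X,
    Polynomial.coeff_mul_C]
  ring

lemma stirling1_succ_zero (k : ℕ) : stirling1 (k+1) 0 = (k:ℝ) * stirling1 k 0 := by
  unfold stirling1
  rw [Finset.prod_range_succ, Polynomial.mul_coeff_zero]
  simp [mul_comm]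

lemma abs_stirling1_le (k : ℕ) : ∀ j, |stirling1 k j| ≤ (Nat.factorial k : ℝ) := by
  induction k with
  | zero =>
    intro j
    unfold stirling1
    simp only [Finset.range_zero, Finset.prod_empty, Polynomial.coeff_one]
    split_ifs <;> simp
  | succ k ih =>
    intro j
    have hk : (0:ℝ) ≤ (k:ℝ) := by positivity
    have hfact : ((Nat.factorial (k+1) : ℝ)) = ((k:ℝ)+1) * (Nat.factorial k : ℝ) := by
      rw [Nat.factorial_succ]; push_cast; ring
    cases j with
    | zero =>
      rw [stirling1_succ_zero, abs_mul, abs_of_nonneg hk, hfact]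
      calc (k:ℝ) * |stirling1 k 0| ≤ (k:ℝ) * (Nat.factorial k : ℝ) := by
            exact mul_le_mul_of_nonneg_left (ih 0) hk
        _ ≤ ((k:ℝ)+1) * (Nat.factorial k : ℝ) := by
            have : (0:ℝ) ≤ (Nat.factorial k : ℝ) := by positivity
            nlinarith
    | succ m =>
      rw [stirling1_succ, hfact]
      calc |(k:ℝ) * stirling1 k (m+1) + stirling1 k m|
          ≤ |(k:ℝ) * stirling1 k (m+1)| + |stirling1 k m| := abs_add_le _ _
        _ = (k:ℝ) * |stirling1 k (m+1)| + |stirling1 k m| := by rw [abs_mul, abs_of_nonneg hk]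
        _ ≤ (k:ℝ) * (Nat.factorial k : ℝ) + (Nat.factorial k : ℝ) := by
            have := ih (m+1); have := ih m
            have : (0:ℝ) ≤ (Nat.factorial k : ℝ) := by positivity
            nlinarith [ih (m+1), ih m]
        _ = ((k:ℝ)+1) * (Nat.factorial k : ℝ) := by ring
section Series
variable (a : ℕ → ℝ)

/-- series coefficients with derivative shift -/
noncomputable def ds (a : ℕ → ℝ) : ℕ → ℝ := fun k => ((k:ℝ)+1) * a (k+1)

noncomputable def fs (a : ℕ → ℝ) (t : ℝ) : ℝ := ∑' k, a k * t ^ k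

lemma ds_bound (ha : ∀ k, |a k| ≤ 1 / (Nat.factorial k : ℝ)) :
    ∀ k, |ds a k| ≤ 1 / (Nat.factorial k : ℝ) := by
  intro k
  have h1 : |ds a k| = ((k:ℝ)+1) * |a (k+1)| := by
    rw [ds, abs_mul, abs_of_nonneg (by positivity)]
  rw [h1]
  have h2 := ha (k+1)
  have hf : ((Nat.factorial (k+1) : ℝ)) = ((k:ℝ)+1) * (Nat.factorial k : ℝ) := by
    rw [Nat.factorial_succ]; push_cast; ring
  calc ((k:ℝ)+1) * |a (k+1)| ≤ ((k:ℝ)+1) * (1 / (Nat.factorial (k+1) : ℝ)) := by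
        exact mul_le_mul_of_nonneg_left h2 (by positivity)
    _ = 1 / (Nat.factorial k : ℝ) := by
        rw [hf]; field_simp
  
lemma summable_fs (ha : ∀ k, |a k| ≤ 1 / (Nat.factorial k : ℝ)) (t : ℝ) :
    Summable fun k => a k * t ^ k := by
  apply Summable.of_norm_bounded (Real.summable_pow_div_factorial |t|)
  intro k
  rw [Real.norm_eq_abs, abs_mul, abs_pow]
  calc |a k| * |t| ^ k ≤ (1 / (Nat.factorial k : ℝ)) * |t| ^ k := by
        exact mul_le_mul_of_nonneg_right (ha k) (by positivity)
    _ = |t| ^ k / (Nat.factorial k : ℝ) := by ring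

lemma summable_k_fs (ha : ∀ k, |a k| ≤ 1 / (Nat.factorial k : ℝ)) (t : ℝ) :
    Summable fun k : ℕ => (k:ℝ) * a k * t ^ k := by
  have h : Summable fun k => (((k:ℕ)+1 : ℕ):ℝ) * a (k+1) * t ^ (k+1) := by
    have := (summable_fs (ds a) (ds_bound a ha) t).mul_left t
    apply this.congr
    intro k
    push_cast [ds]
    ring
  exact (summable_nat_add_iff 1).mp h

lemma t_mul_fs_ds (ha : ∀ k, |a k| ≤ 1 / (Nat.factorial k : ℝ)) (t : ℝ) :
    t * fs (ds a) t = ∑' k : ℕ, (k:ℝ) * a k * t ^ k := by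
  rw [fs, ← tsum_mul_left, Summable.tsum_eq_zero_add (summable_k_fs a ha t)]
  simp only [Nat.cast_zero, zero_mul, zero_add]
  apply tsum_congr
  intro k
  push_cast [ds]
  ring

lemma hasDerivAt_fs (ha : ∀ k, |a k| ≤ 1 / (Nat.factorial k : ℝ)) (t : ℝ) :
    HasDerivAt (fs a) (fs (ds a) t) t := by
  set R : ℝ := |t| + 1 with hR
  have hR1 : (1:ℝ) ≤ R := by rw [hR]; linarith [abs_nonneg t]
  have hRpos : (0:ℝ) < R := lt_of_lt_of_le one_pos hR1
  have husum : Summable fun k : ℕ => (k:ℝ) / (Nat.factorial k : ℝ) * R ^ k := by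
    have := summable_k_fs (fun k => 1 / (Nat.factorial k : ℝ))
      (fun k => by rw [abs_of_nonneg (by positivity)]) R
    apply this.congr; intro k; ring
  have key : HasDerivAt (fun z => ∑' k, a k * z ^ k)
      (∑' k, a k * ((k:ℝ) * t ^ (k-1))) t := by
    apply hasDerivAt_tsum_of_isPreconnected husum (Metric.isOpen_ball (x := (0:ℝ)) (ε := R))
      (convex_ball (0:ℝ) R).isPreconnected
      (g := fun k z => a k * z ^ k) (g' := fun k z => a k * ((k:ℝ) * z ^ (k-1)))
      (y₀ := 0) (y := t)
    · intro n y _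
      exact (hasDerivAt_pow n y).const_mul (a n)
    · intro n y hy
      rw [Metric.mem_ball, Real.dist_eq, sub_zero] at hy
      rw [Real.norm_eq_abs, abs_mul, abs_mul, abs_pow]
      have h1 : |a n| * (|(n:ℝ)| * |y| ^ (n-1)) ≤ (1/(Nat.factorial n : ℝ)) * ((n:ℝ) * R ^ n) := by
        apply mul_le_mul (ha n)
        · rw [abs_of_nonneg (n.cast_nonneg)]
          apply mul_le_mul_of_nonneg_left _ (n.cast_nonneg)
          calc |y| ^ (n-1) ≤ R ^ (n-1) := by
                apply pow_le_pow_left₀ (abs_nonneg y) (le_of_lt hy)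
            _ ≤ R ^ n := pow_le_pow_right₀ hR1 (Nat.sub_le n 1)
        · positivity
        · positivity
      calc |a n| * (|(n:ℝ)| * |y| ^ (n-1)) ≤ (1/(Nat.factorial n : ℝ)) * ((n:ℝ) * R ^ n) := h1
        _ = (n:ℝ) / (Nat.factorial n : ℝ) * R ^ n := by ring
    · simp [Metric.mem_ball, abs_nonneg, hRpos]
    · exact summable_fs a ha 0
    · rw [Metric.mem_ball, Real.dist_eq, sub_zero]; simp [hR]
  have heq : (∑' k, a k * ((k:ℝ) * t ^ (k-1))) = fs (ds a) t := by
    have hsum2 : Summable fun k : ℕ => a k * ((k:ℝ) * t ^ (k-1)) := by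
      have h := (summable_fs (ds a) (ds_bound a ha) t)
      have h2 : Summable fun k : ℕ => a (k+1) * ((((k:ℕ)+1:ℕ)):ℝ) * t ^ k := by
        apply h.congr; intro k; push_cast [ds]; ring
      have := (summable_nat_add_iff (f := fun k : ℕ => a k * ((k:ℝ) * t ^ (k-1))) 1).mp
      apply this
      apply h2.congr
      intro k
      push_cast
      ring_nf
    rw [Summable.tsum_eq_zero_add hsum2]
    simp only [Nat.cast_zero, zero_mul, mul_zero, zero_add]
    rw [fs]
    apply tsum_congr
    intro k
    push_cast [ds]
    ring_nf
  rw [← heq]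
  exact key

lemma continuous_fs (ha : ∀ k, |a k| ≤ 1 / (Nat.factorial k : ℝ)) : Continuous (fs a) :=
  continuous_iff_continuousAt.mpr fun t => (hasDerivAt_fs a ha t).continuousAt

end Series

noncomputable def co (j : ℕ) : ℕ → ℝ :=
  fun k => stirling1 k j / ((Nat.factorial k : ℝ) * (Nat.factorial k : ℝ))

lemma co_bound (j : ℕ) : ∀ k, |co j k| ≤ 1 / (Nat.factorial k : ℝ) := by
  intro k
  have hpos : (0:ℝ) < (Nat.factorial k : ℝ) := by positivity
  have h : (1:ℝ) / (Nat.factorial k : ℝ)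
      = (Nat.factorial k : ℝ) / ((Nat.factorial k : ℝ) * (Nat.factorial k : ℝ)) := by
    field_simp
  rw [co, abs_div, abs_of_nonneg (by positivity : (0:ℝ) ≤ (Nat.factorial k : ℝ) * (Nat.factorial k : ℝ)), h]
  gcongr
  exact abs_stirling1_le k j

lemma pfn_eq (j : ℕ) (t : ℝ) : pfn j t = Real.exp (-t) * fs (co j) t := by
  unfold pfn fs co
  congr 1
  apply tsum_congr
  intro k
  ring

lemma coeffkey (m k : ℕ) :
    ((k:ℝ)+1) * ds (co (m+1)) k = co m k + (k:ℝ) * co (m+1) k := by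
  have h : (Nat.factorial k : ℝ) ≠ 0 := by positivity
  unfold ds co
  rw [stirling1_succ k m, Nat.factorial_succ]
  push_cast
  field_simp
  ring

lemma key (m : ℕ) (t : ℝ) :
    fs (ds (co (m+1))) t + t * fs (ds (ds (co (m+1)))) t
      = fs (co m) t + t * fs (ds (co (m+1))) t := by
  have hb := co_bound (m+1)
  have hb' := ds_bound _ hb
  rw [t_mul_fs_ds _ hb', t_mul_fs_ds _ hb]
  rw [show fs (ds (co (m+1))) t = ∑' k : ℕ, ds (co (m+1)) k * t ^ k from rfl,
      show fs (co m) t = ∑' k : ℕ, co m k * t ^ k from rfl]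
  rw [← Summable.tsum_add (summable_fs _ hb' t) (summable_k_fs _ hb' t),
      ← Summable.tsum_add (summable_fs (co m) (co_bound m) t) (summable_k_fs _ hb t)]
  apply tsum_congr
  intro k
  have hk := coeffkey m k
  linear_combination t ^ k * hk


/-- The differential recursion for the record-count probabilities:
`p_j(0) = 0` and `p_j'(t) = -p_j(t) + (1/t)∫_0^t p_{j-1}(s) ds` for `t > 0`, `j ≥ 1`. -/
theorem stmt11 (j : ℕ) (hj : 1 ≤ j) :
    pfn j 0 = 0 ∧
    ∀ t : ℝ, 0 < t →
      HasDerivAt (pfn j) (-pfn j t + (1 / t) * ∫ s in (0:ℝ)..t, pfn (j - 1) s) t := by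
  obtain ⟨m, rfl⟩ : ∃ m, j = m + 1 := ⟨j - 1, (Nat.succ_pred_eq_of_pos hj).symm⟩
  have hm : (m + 1) - 1 = m := rfl
  constructor
  · rw [pfn_eq]
    have : fs (co (m+1)) 0 = co (m+1) 0 := by
      rw [fs, tsum_eq_single 0]
      · simp
      · intro k hk
        simp [zero_pow hk]
    rw [this]
    have : co (m+1) 0 = 0 := by
      unfold co stirling1
      simp [Polynomial.coeff_one]
    simp [this]
  · intro t ht
    have hbc := co_bound (m+1)
    have hbD := ds_bound _ hbc
    set D := ds (co (m+1)) with hD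
    -- derivative of pfn (m+1)
    have hfun : pfn (m+1) = fun x => Real.exp (-x) * fs (co (m+1)) x := funext (pfn_eq _)
    have hexp : ∀ x : ℝ, HasDerivAt (fun y : ℝ => Real.exp (-y)) (-Real.exp (-x)) x := by
      intro x
      simpa using (hasDerivAt_neg x).exp
    have h1 : HasDerivAt (pfn (m+1)) (-pfn (m+1) t + Real.exp (-t) * fs D t) t := by
      have hmul := (hexp t).mul (hasDerivAt_fs _ hbc t)
      have h0 : HasDerivAt (pfn (m+1))
          (-Real.exp (-t) * fs (co (m+1)) t + Real.exp (-t) * fs (ds (co (m+1))) t) t := by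
        rw [hfun]; exact hmul
      convert h0 using 1
      rw [pfn_eq, ← hD]
      ring
    -- continuity of pfn m
    have hcont : Continuous (pfn m) := by
      have : pfn m = fun x => Real.exp (-x) * fs (co m) x := funext (pfn_eq _)
      rw [this]
      exact (Real.continuous_exp.comp continuous_neg).mul (continuous_fs _ (co_bound m))
    -- the function Φ is constant
    set Φ : ℝ → ℝ := fun x => x * (Real.exp (-x) * fs D x) - ∫ s in (0:ℝ)..x, pfn m s with hΦ
    have hder : ∀ x, HasDerivAt Φ 0 x := by
      intro x
      have hA : HasDerivAt (fun y => y * (Real.exp (-y) * fs D y))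
          (1 * (Real.exp (-x) * fs D x) +
            x * (-Real.exp (-x) * fs D x + Real.exp (-x) * fs (ds D) x)) x :=
        (hasDerivAt_id x).mul ((hexp x).mul (hasDerivAt_fs D hbD x))
      have hB : HasDerivAt (fun y => ∫ s in (0:ℝ)..y, pfn m s) (pfn m x) x :=
        intervalIntegral.integral_hasDerivAt_right (hcont.intervalIntegrable _ _)
          hcont.stronglyMeasurable.stronglyMeasurableAtFilter hcont.continuousAt
      have h := hA.sub hB
      refine h.congr_deriv ?_; symm
      rw [pfn_eq]
      have hk := key m x
      rw [← hD] at hk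
      linear_combination (-(Real.exp (-x))) * hk
    have hconst : Φ t = Φ 0 :=
      is_const_of_deriv_eq_zero (fun y => (hder y).differentiableAt)
        (fun y => (hder y).deriv) t 0
    have hΦ0 : Φ 0 = 0 := by simp [hΦ]
    have hint : ∫ s in (0:ℝ)..t, pfn m s = t * (Real.exp (-t) * fs D t) := by
      have h2 : t * (Real.exp (-t) * fs D t) - ∫ s in (0:ℝ)..t, pfn m s = 0 :=
        hconst.trans hΦ0
      linarith [h2]
    rw [hm, hint]
    have htne : t ≠ 0 := ne_of_gt ht
    have : 1 / t * (t * (Real.exp (-t) * fs D t)) = Real.exp (-t) * fs D t := by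
      field_simp
    rw [this]
    exact h1
end
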